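/- arXiv:2407.20362 — 8 statements merged into one kernel-verified Lean document; each statement's English description precedes it below -/
import Mathlib

section
/- Let M be a real symmetric n×n matrix. For k = 1,…,n, let M_k denote the k×k leading principal submatrix of M, and for i = 0,…,k let c_{k,i} denote the coefficient of sⁱ in the univariate polynomial s ↦ det(M_k + s I_k), where I_k is the k×k identity matrix. Then M is positive semidefinite if and only if c_{k,i} ≥ 0 for all k = 1,…,n and i = 0,…,k. -/
open Matrix Polynomial

private lemma coeff_prod_nonneg {ι : Type*} (s : Finset ι) (f : ι → Polynomial ℝ)
    (h : ∀ j ∈ s, ∀ i, 0 ≤ (f j).coeff i) : ∀ i, 0 ≤ (s.prod f).coeff i := by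
  induction s using Finset.cons_induction with
  | empty => intro i; simp [Polynomial.coeff_one]; positivity
  | cons a s ha ih =>
    intro i
    rw [Finset.prod_cons, Polynomial.coeff_mul]
    refine Finset.sum_nonneg fun p _ => mul_nonneg (h a (Finset.mem_cons_self a s) _)
      (ih (fun j hj => h j (Finset.mem_cons_of_mem hj)) _)

private lemma key_det {m : ℕ} (A : Matrix (Fin m) (Fin m) ℝ) (hA : A.IsHermitian) :
    (A.map (fun a => Polynomial.C a) + (Polynomial.X : Polynomial ℝ) • 1).det
      = ∏ i, ((Polynomial.X : Polynomial ℝ) + Polynomial.C (hA.eigenvalues i)) := by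
  set V : Matrix (Fin m) (Fin m) ℝ := (hA.eigenvectorUnitary : Matrix (Fin m) (Fin m) ℝ)
  have hVV : V * star V = 1 := (Matrix.mem_unitaryGroup_iff).mp hA.eigenvectorUnitary.2
  have hVV' : star V * V = 1 := (Matrix.mem_unitaryGroup_iff').mp hA.eigenvectorUnitary.2
  have hspec : A = V * Matrix.diagonal hA.eigenvalues * star V := by
    have := hA.spectral_theorem
    simpa using this
  have hCmap : ∀ (P Q : Matrix (Fin m) (Fin m) ℝ),
      (P * Q).map (fun a => Polynomial.C a) =
        P.map (fun a => Polynomial.C a) * Q.map (fun a => Polynomial.C a) := by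
    intro P Q
    exact Matrix.map_mul (f := (Polynomial.C : ℝ →+* Polynomial ℝ))
  have hkey : A.map (fun a => Polynomial.C a) + (Polynomial.X : Polynomial ℝ) • 1 =
      V.map (fun a => Polynomial.C a) *
        ((Matrix.diagonal hA.eigenvalues).map (fun a => Polynomial.C a)
          + (Polynomial.X : Polynomial ℝ) • 1) *
        (star V).map (fun a => Polynomial.C a) := by
    rw [mul_add, add_mul]
    congr 1
    · rw [← hCmap, ← hCmap, ← hspec]
    · rw [Matrix.mul_smul, Matrix.mul_one, Matrix.smul_mul, ← hCmap, hVV]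
      simp
  rw [hkey, Matrix.det_mul, Matrix.det_mul]
  have hdet1 : (V.map (fun a => Polynomial.C a)).det *
      ((star V).map (fun a => Polynomial.C a)).det = 1 := by
    rw [← Matrix.det_mul, ← hCmap, hVV]
    simp
  rw [mul_right_comm, hdet1, one_mul]
  have hdiag : (Matrix.diagonal hA.eigenvalues).map (fun a => Polynomial.C a)
      + (Polynomial.X : Polynomial ℝ) • 1 =
      Matrix.diagonal (fun i => Polynomial.C (hA.eigenvalues i) + Polynomial.X) := by
    rw [Matrix.diagonal_map (by simp), Matrix.smul_one_eq_diagonal, Matrix.diagonal_add]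
  rw [hdiag, Matrix.det_diagonal]
  exact Finset.prod_congr rfl fun i _ => by ring

/-- a real symmetric `n × n` matrix `M` is positive semidefinite if and only if,
for every `k = 1, …, n` and `i = 0, …, k`, the coefficient of `sⁱ` in the univariate
polynomial `s ↦ det(M_k + s I_k)` is nonnegative, where `M_k` is the `k × k` leading
principal submatrix of `M`. -/
theorem stmt_1 {n : ℕ} (M : Matrix (Fin n) (Fin n) ℝ) (hM : M.IsSymm) :
    M.PosSemidef ↔
      ∀ (k : ℕ), 1 ≤ k → ∀ (hkn : k ≤ n), ∀ i : ℕ, i ≤ k →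
        0 ≤ (((M.submatrix (Fin.castLE hkn) (Fin.castLE hkn)).map (fun a => Polynomial.C a)
              + (Polynomial.X : Polynomial ℝ) •
                  (1 : Matrix (Fin k) (Fin k) (Polynomial ℝ))).det).coeff i := by
  have hMherm : M.IsHermitian := by
    rw [Matrix.IsHermitian, Matrix.conjTranspose_eq_transpose_of_trivial]
    exact hM
  constructor
  · intro hPSD k hk hkn i hi
    have hsub : (M.submatrix (Fin.castLE hkn) (Fin.castLE hkn)).PosSemidef :=
      hPSD.submatrix _
    have hherm := hsub.isHermitian
    rw [key_det _ hherm]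
    refine coeff_prod_nonneg _ _ (fun j _ i => ?_) i
    have hev : 0 ≤ hherm.eigenvalues j := hsub.eigenvalues_nonneg j
    match i with
    | 0 => simpa using hev
    | 1 => simp
    | (m+2) => simp [Polynomial.coeff_C, Polynomial.coeff_X]
  · intro h
    rcases Nat.eq_zero_or_pos n with hn | hn
    · subst hn
      refine ⟨hMherm, fun x => ?_⟩
      have : x = 0 := Subsingleton.elim _ _
      simp [this]
    · have hcoeff := h n hn (le_refl n)
      have hid : M.submatrix (Fin.castLE (le_refl n)) (Fin.castLE (le_refl n)) = M := by
        ext i j; simp [Fin.castLE]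
      rw [hid, key_det M hMherm] at hcoeff
      refine (Matrix.IsHermitian.posSemidef_iff_eigenvalues_nonneg hMherm).mpr fun j => show (0:ℝ) ≤ hMherm.eigenvalues j from ?_
      by_contra hneg
      push_neg at hneg
      set p : Polynomial ℝ := ∏ i, ((Polynomial.X : Polynomial ℝ) + Polynomial.C (hMherm.eigenvalues i))
      have hmonic : p.Monic :=
        Polynomial.monic_prod_of_monic _ _ fun i _ => Polynomial.monic_X_add_C _
      have hdeg : p.natDegree = n := by
        rw [Polynomial.natDegree_prod_of_monic _ _ fun i _ => Polynomial.monic_X_add_C _]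
        simp
      set s : ℝ := -(hMherm.eigenvalues j) with hs
      have hspos : 0 < s := by simp [hs]; linarith
      have heval0 : p.eval s = 0 := by
        rw [Polynomial.eval_prod]
        exact Finset.prod_eq_zero (Finset.mem_univ j) (by simp [hs])
      have heval_ge : s ^ n ≤ p.eval s := by
        rw [Polynomial.eval_eq_sum_range, hdeg]
        have hterm : p.coeff n * s ^ n = s ^ n := by
          have : p.coeff n = 1 := by
            have := hmonic.leadingCoeff
            rwa [Polynomial.leadingCoeff, hdeg] at this
          rw [this, one_mul]
        calc s ^ n = p.coeff n * s ^ n := hterm.symm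
          _ ≤ ∑ i ∈ Finset.range (n + 1), p.coeff i * s ^ i := by
              refine Finset.single_le_sum (f := fun i => p.coeff i * s ^ i)
                (fun i hi => mul_nonneg ?_ (le_of_lt (pow_pos hspos i)))
                (Finset.self_mem_range_succ n)
              exact hcoeff i (Nat.lt_succ_iff.mp (Finset.mem_range.mp hi))
      have : (0:ℝ) < 0 := lt_of_lt_of_le (pow_pos hspos n) (heval0 ▸ heval_ge)
      exact absurd this (lt_irrefl 0)
end

section
/- Let P(t) be a symmetric n×n univariate polynomial matrix of degree at most d, and define the polynomial matrix Q(t) := (t²+1)ᵈ · P((t²-1)/(t²+1)). Then P(t) is positive semidefinite for every t ∈ [-1,1] if and only if Q(t) is positive semidefinite for every t ∈ ℝ. -/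
open Matrix Polynomial

/-- for a symmetric univariate polynomial matrix `P(t)` of degree at most `d`,
`P(t) ⪰ 0` for all `t ∈ [-1,1]` if and only if the polynomial matrix
`Q(t) = (t²+1)ᵈ · P((t²-1)/(t²+1))` satisfies `Q(t) ⪰ 0` for all `t ∈ ℝ`. -/
theorem stmt_2 {n d : ℕ} (P : Matrix (Fin n) (Fin n) (Polynomial ℝ))
    (hsymm : P.IsSymm) (hdeg : ∀ i j, (P i j).natDegree ≤ d) :
    (∀ t ∈ Set.Icc (-1 : ℝ) 1, (P.map (Polynomial.eval t)).PosSemidef) ↔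
    (∀ t : ℝ,
      ((t ^ 2 + 1) ^ d •
        P.map (Polynomial.eval ((t ^ 2 - 1) / (t ^ 2 + 1)))).PosSemidef) := by
  have hpos : ∀ t : ℝ, (0:ℝ) < t ^ 2 + 1 := fun t => by positivity
  have hherm : ∀ s : ℝ, (P.map (Polynomial.eval s)).IsHermitian := by
    intro s
    ext i j
    simp [Matrix.conjTranspose_apply, Matrix.map_apply]
    have := congrFun (congrFun hsymm i) j
    simp [Matrix.transpose_apply] at this
    rw [this]
  constructor
  · intro h t
    have hs : (t ^ 2 - 1) / (t ^ 2 + 1) ∈ Set.Icc (-1:ℝ) 1 := by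
      constructor
      · rw [le_div_iff₀ (hpos t)]; nlinarith [hpos t]
      · rw [div_le_one (hpos t)]; nlinarith
    obtain ⟨hH, hx⟩ := Matrix.posSemidef_iff_dotProduct_mulVec.mp (h _ hs)
    rw [Matrix.posSemidef_iff_dotProduct_mulVec]
    constructor
    · unfold Matrix.IsHermitian
      rw [Matrix.conjTranspose_smul, (hherm _).eq]
      norm_num
    · intro x
      have := hx x
      rw [Matrix.smul_mulVec, dotProduct_smul]
      have hc : (0:ℝ) ≤ (t ^ 2 + 1) ^ d := le_of_lt (pow_pos (hpos t) d)
      simpa using mul_nonneg hc this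
  · intro h s hs
    refine Matrix.posSemidef_iff_dotProduct_mulVec.mpr ⟨hherm s, fun x => ?_⟩
    -- quadratic form as polynomial evaluation
    set p : Polynomial ℝ := ∑ i, ∑ j, Polynomial.C (x i * x j) * P i j with hp
    have hq : ∀ u : ℝ, star x ⬝ᵥ (P.map (Polynomial.eval u)) *ᵥ x = p.eval u := by
      intro u
      simp [hp, dotProduct, Matrix.mulVec, Matrix.map_apply, Polynomial.eval_finset_sum,
        Finset.mul_sum, Finset.sum_mul, mul_comm, mul_assoc, mul_left_comm]
    have key : ∀ u ∈ Set.Ico (-1:ℝ) 1, 0 ≤ p.eval u := by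
      intro u hu
      have h1u : (0:ℝ) < 1 - u := by linarith [hu.2]
      have h1u' : (0:ℝ) ≤ (1 + u) / (1 - u) := by
        apply div_nonneg <;> linarith [hu.1]
      set t := Real.sqrt ((1 + u) / (1 - u)) with ht
      have ht2 : t ^ 2 = (1 + u) / (1 - u) := Real.sq_sqrt h1u'
      have hts : (t ^ 2 - 1) / (t ^ 2 + 1) = u := by
        rw [ht2]
        field_simp
        ring
      obtain ⟨_, hx⟩ := Matrix.posSemidef_iff_dotProduct_mulVec.mp (h t)
      have := hx x
      rw [Matrix.smul_mulVec, dotProduct_smul, hts, smul_eq_mul] at this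
      have hc : (0:ℝ) < (t ^ 2 + 1) ^ d := pow_pos (hpos t) d
      rw [← hq u]
      exact nonneg_of_mul_nonneg_right this hc
    have hcl : (1:ℝ) ∈ closure (Set.Ico (-1:ℝ) 1) := by
      rw [closure_Ico (by norm_num : (-1:ℝ) ≠ 1)]
      exact ⟨by norm_num, le_refl _⟩
    rcases eq_or_lt_of_le hs.2 with h1 | h1
    · rw [hq s, h1]
      have : ∀ u ∈ closure (Set.Ico (-1:ℝ) 1), 0 ≤ p.eval u := by
        intro u hu
        have hcont : ContinuousOn (fun u => p.eval u) (closure (Set.Ico (-1:ℝ) 1)) :=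
          (Polynomial.continuous p).continuousOn
        exact le_on_closure key continuousOn_const hcont hu
      exact this 1 hcl
    · rw [hq s]
      exact key s ⟨hs.1, h1⟩
end

section
/- Let E = {0} ∪ {x ∈ ℝ² \ {0} : x₁²x₂²/(x₁²+x₂²) + 2x₁² + 3x₂² ≤ 1}. Then there do not exist a nonnegative integer m and real positive semidefinite 2×2 matrices P₁,…,P_m such that E = {x ∈ ℝ² : xᵀPᵢx ≤ 1 for i = 1,…,m}. -/
open Matrix Polynomial

/-- the set `E = {0} ∪ {x ∈ ℝ² \ {0} : x₁²x₂²/(x₁²+x₂²) + 2x₁² + 3x₂² ≤ 1}`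
cannot be written as `{x : xᵀPᵢx ≤ 1, i = 1,…,m}` for finitely many real positive
semidefinite `2 × 2` matrices `P₁, …, P_m`. -/
theorem stmt_7 :
    ¬ ∃ (m : ℕ) (P : Fin m → Matrix (Fin 2) (Fin 2) ℝ),
        (∀ i, (P i).PosSemidef) ∧
        ({0} ∪ {x : Fin 2 → ℝ | x ≠ 0 ∧
            (x 0) ^ 2 * (x 1) ^ 2 / ((x 0) ^ 2 + (x 1) ^ 2)
              + 2 * (x 0) ^ 2 + 3 * (x 1) ^ 2 ≤ 1}) =
          {x : Fin 2 → ℝ | ∀ i, x ⬝ᵥ (P i).mulVec x ≤ 1} := by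
  rintro ⟨m, P, hpsd, hset⟩
  -- abbreviations
  set f : (Fin 2 → ℝ) → ℝ := fun x =>
    (x 0) ^ 2 * (x 1) ^ 2 / ((x 0) ^ 2 + (x 1) ^ 2)
      + 2 * (x 0) ^ 2 + 3 * (x 1) ^ 2 with hf_def
  set q : Fin m → (Fin 2 → ℝ) → ℝ := fun i x => x ⬝ᵥ (P i).mulVec x with hq_def
  -- positivity of the denominator
  have hsum : ∀ x : Fin 2 → ℝ, x ≠ 0 → 0 < (x 0) ^ 2 + (x 1) ^ 2 := by
    intro x hx
    have h01 : x 0 ≠ 0 ∨ x 1 ≠ 0 := by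
      by_contra h
      push_neg at h
      exact hx (funext fun i => by fin_cases i <;> simp [h.1, h.2])
    rcases h01 with h | h
    · positivity
    · positivity
  have hfpos : ∀ x : Fin 2 → ℝ, x ≠ 0 → 0 < f x := by
    intro x hx
    have h1 := hsum x hx
    have h2 : 0 ≤ (x 0) ^ 2 * (x 1) ^ 2 / ((x 0) ^ 2 + (x 1) ^ 2) := by positivity
    simp only [hf_def]
    nlinarith [h1, h2]
  -- homogeneity of q
  have hqhom : ∀ (i : Fin m) (t : ℝ) (x : Fin 2 → ℝ), q i (t • x) = t ^ 2 * q i x := by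
    intro i t x
    simp only [hq_def, mulVec_smul, smul_dotProduct, dotProduct_smul, smul_eq_mul]
    ring
  -- nonnegativity of q
  have hqnn : ∀ (i : Fin m) (x : Fin 2 → ℝ), 0 ≤ q i x := by
    intro i x
    simpa [hq_def, dotProduct, Fin.sum_univ_two] using (hpsd i).dotProduct_mulVec_nonneg x
  -- homogeneity of f
  have hfhom : ∀ (t : ℝ) (x : Fin 2 → ℝ), t ≠ 0 → x ≠ 0 → f (t • x) = t ^ 2 * f x := by
    intro t x ht hx
    have h1 := hsum x hx
    have ht2 : 0 < t ^ 2 := by rcases ht.lt_or_gt with h | h <;> nlinarith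
    have h2 : t ^ 2 * (x 0) ^ 2 + t ^ 2 * (x 1) ^ 2 ≠ 0 := by nlinarith
    simp only [hf_def, Pi.smul_apply, smul_eq_mul]
    rw [mul_pow, mul_pow]
    field_simp
  -- nonzero scalings of nonzero vectors are nonzero
  have hsmulne : ∀ (t : ℝ) (x : Fin 2 → ℝ), t ≠ 0 → x ≠ 0 → t • x ≠ 0 := fun t x ht hx =>
    smul_ne_zero ht hx
  -- membership transfer
  have hmem : ∀ x : Fin 2 → ℝ, x ≠ 0 → f x ≤ 1 → ∀ i, q i x ≤ 1 := by
    intro x hx hfx i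
    have : x ∈ ({0} ∪ {x : Fin 2 → ℝ | x ≠ 0 ∧ f x ≤ 1} : Set (Fin 2 → ℝ)) :=
      Set.mem_union_right _ ⟨hx, hfx⟩
    rw [hset] at this
    exact this i
  have hmem' : ∀ x : Fin 2 → ℝ, (∀ i, q i x ≤ 1) → x = 0 ∨ f x ≤ 1 := by
    intro x hx
    have : x ∈ ({0} ∪ {x : Fin 2 → ℝ | x ≠ 0 ∧ f x ≤ 1} : Set (Fin 2 → ℝ)) := by
      rw [hset]; exact hx
    rcases this with h | h
    · exact Or.inl h
    · exact Or.inr h.2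
  -- ∀ i, q i x ≤ f x for x ≠ 0
  have hle : ∀ (x : Fin 2 → ℝ), x ≠ 0 → ∀ i, q i x ≤ f x := by
    intro x hx i
    have hc := hfpos x hx
    set t : ℝ := (Real.sqrt (f x))⁻¹ with ht_def
    have hst : Real.sqrt (f x) > 0 := Real.sqrt_pos.mpr hc
    have ht : t > 0 := by positivity
    have ht2 : t ^ 2 = (f x)⁻¹ := by
      rw [ht_def, inv_pow, Real.sq_sqrt hc.le]
    have hfy : f (t • x) = 1 := by
      rw [hfhom t x ht.ne' hx, ht2]
      field_simp
    have := hmem (t • x) (hsmulne t x ht.ne' hx) hfy.le i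
    rw [hqhom, ht2] at this
    rw [inv_mul_le_iff₀ hc, mul_one] at this
    exact this
  -- m = 0 is impossible
  have hm : 0 < m := by
    rcases Nat.eq_zero_or_pos m with hm0 | hm0
    · exfalso
      subst hm0
      have h := hmem' ![1, 0] (fun i => i.elim0)
      rcases h with h | h
      · exact one_ne_zero (congrFun h 0)
      · simp [hf_def] at h
    · exact hm0
  -- ∃ i, q i x = f x for x ≠ 0
  have hex : ∀ (x : Fin 2 → ℝ), x ≠ 0 → ∃ i, q i x = f x := by
    intro x hx
    by_contra h
    push_neg at h
    have hlt : ∀ i, q i x < f x := fun i => lt_of_le_of_ne (hle x hx i) (h i)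
    have hne : (Finset.univ : Finset (Fin m)).Nonempty := by
      simpa [Finset.univ_nonempty_iff] using Fin.pos_iff_nonempty.mp hm
    set b : ℝ := Finset.univ.sup' hne (fun i => q i x) with hb_def
    have hqb : ∀ i, q i x ≤ b := by
      intro i
      rw [hb_def]
      exact Finset.le_sup' (fun i => q i x) (Finset.mem_univ i)
    have hbc : b < f x := by
      rw [hb_def, Finset.sup'_lt_iff]
      intro i _
      exact hlt i
    have hc := hfpos x hx
    have hb0 : 0 ≤ b := le_trans (hqnn ⟨0, hm⟩ x) (hqb ⟨0, hm⟩)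
    have hbcpos : 0 < b + f x := by linarith
    set t : ℝ := Real.sqrt (2 / (b + f x)) with ht_def
    have ht : 0 < t := Real.sqrt_pos.mpr (div_pos two_pos hbcpos)
    have ht2 : t ^ 2 = 2 / (b + f x) := Real.sq_sqrt (le_of_lt (div_pos two_pos hbcpos))
    have hyK : ∀ i, q i (t • x) ≤ 1 := by
      intro i
      rw [hqhom, ht2]
      have h1 : q i x ≤ b := hqb i
      rw [div_mul_eq_mul_div, div_le_one hbcpos]
      nlinarith [hlt i, hqnn i x]
    have := hmem' (t • x) hyK
    rcases this with h0 | h1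
    · exact hsmulne t x ht.ne' hx h0
    · rw [hfhom t x ht.ne' hx, ht2] at h1
      rw [div_mul_eq_mul_div, div_le_one hbcpos] at h1
      linarith
  -- evaluation of f and q on the test points (1, k)
  have hfval : ∀ k : ℝ, f ![1, k] = k ^ 2 / (1 + k ^ 2) + 2 + 3 * k ^ 2 := by
    intro k
    simp only [hf_def]
    norm_num [Matrix.cons_val_zero, Matrix.cons_val_one, Matrix.head_cons]
  have hqval : ∀ (i : Fin m) (k : ℝ),
      q i ![1, k] = P i 0 0 + (P i 0 1 + P i 1 0) * k + P i 1 1 * k ^ 2 := by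
    intro i k
    simp [hq_def, dotProduct, mulVec, Fin.sum_univ_two]
    ring
  -- choose for each k ≤ 4m an index achieving equality
  have hne01 : ∀ k : ℝ, (![1, k] : Fin 2 → ℝ) ≠ 0 := by
    intro k h
    exact one_ne_zero (congrFun h 0)
  have key : ∀ k : Fin (4 * m + 1), ∃ i, q i ![1, ((k : ℕ) : ℝ)] = f ![1, ((k : ℕ) : ℝ)] :=
    fun k => hex _ (hne01 _)
  choose F hF using key
  -- pigeonhole: some index works for at least 5 points
  have hcard : Fintype.card (Fin m) * 4 < Fintype.card (Fin (4 * m + 1)) := by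
    simp; omega
  obtain ⟨i₀, hi₀⟩ := Fintype.exists_lt_card_fiber_of_mul_lt_card F hcard
  set A : ℝ := P i₀ 0 0 with hA
  set B : ℝ := P i₀ 0 1 + P i₀ 1 0 with hB
  set Cc : ℝ := P i₀ 1 1 with hC
  -- the quartic polynomial that vanishes on the fiber
  set h : ℝ[X] := C (A - 2) + C B * X + C (A + Cc - 6) * X ^ 2 + C B * X ^ 3
      + C (Cc - 3) * X ^ 4 with hh_def
  have heval : ∀ k : {x // x ∈ Finset.univ.filter (fun x => F x = i₀)},
      h.eval ((((k : Fin (4 * m + 1)) : ℕ) : ℝ)) = 0 := by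
    rintro ⟨k, hk⟩
    have hFk : F k = i₀ := (Finset.mem_filter.mp hk).2
    have heq := hF k
    rw [hFk] at heq
    set s : ℝ := ((k : ℕ) : ℝ) with hs_def
    rw [hqval, hfval] at heq
    have hd : (1 : ℝ) + s ^ 2 ≠ 0 := by positivity
    field_simp at heq
    simp only [hh_def, eval_add, eval_mul, eval_pow, eval_C, eval_X, hA, hB, hC]
    linear_combination heq
  have hinjf : Function.Injective (fun k : Fin (4 * m + 1) => ((k : ℕ) : ℝ)) := by
    intro a b hab
    exact Fin.ext (Nat.cast_injective hab)
  set S : Finset ℝ :=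
    (Finset.univ.filter (fun x => F x = i₀)).image (fun k : Fin (4 * m + 1) => ((k : ℕ) : ℝ))
    with hS_def
  have hScard : 4 < S.card := by
    rw [hS_def, Finset.card_image_of_injective _ hinjf]
    exact hi₀
  have hevalS : ∀ r ∈ S, h.eval r = 0 := by
    intro r hr
    rw [hS_def, Finset.mem_image] at hr
    obtain ⟨k, hk, rfl⟩ := hr
    exact heval ⟨k, hk⟩
  have hdeg : h.natDegree ≤ 4 := by
    rw [hh_def]
    compute_degree
  have hzero : h = 0 :=
    Polynomial.eq_zero_of_natDegree_lt_card_of_eval_eq_zero' h S hevalS (by omega)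
  -- extract coefficients and derive the contradiction
  have c0 : A - 2 = 0 := by
    have hc := congrArg (fun p => Polynomial.coeff p 0) hzero
    simp only [hh_def, coeff_add, coeff_C_mul, coeff_X_pow, coeff_X, coeff_C, coeff_zero] at hc
    norm_num at hc
    linarith [hc]
  have c4 : Cc - 3 = 0 := by
    have hc := congrArg (fun p => Polynomial.coeff p 4) hzero
    simp only [hh_def, coeff_add, coeff_C_mul, coeff_X_pow, coeff_X, coeff_C, coeff_zero] at hc
    norm_num at hc
    linarith [hc]
  have c2 : A + Cc - 6 = 0 := by
    have hc := congrArg (fun p => Polynomial.coeff p 2) hzero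
    simp only [hh_def, coeff_add, coeff_C_mul, coeff_X_pow, coeff_X, coeff_C, coeff_zero] at hc
    norm_num at hc
    linarith [hc]
  linarith
end

section
/- Let m ≥ 2 be an integer and let P₁, …, P_m be real positive semidefinite n×n matrices. If the set T = ⋂_{i=1}^m {x ∈ ℝⁿ : xᵀPᵢx ≤ 1} is compact, then T is a generalized ellipsoid of degree d centered at the origin for some d ≤ 2m-3. -/
open Matrix Polynomial

/-- `E ⊆ ℝⁿ` is a generalized ellipsoid of degree `d` (GE-`d`) centered at the origin. -/
def IsGE (n d : ℕ) (E : Set (Fin n → ℝ)) : Prop :=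
  ∃ P : Matrix (Fin n) (Fin n) (Polynomial ℝ),
    P.IsSymm ∧
    (∀ i j, (P i j).natDegree ≤ d) ∧
    (∀ t ∈ Set.Icc (-1 : ℝ) 1, (P.map (Polynomial.eval t)).PosSemidef) ∧
    (∀ x : Fin n → ℝ,
      (∀ t ∈ Set.Icc (-1 : ℝ) 1, (P.map (Polynomial.eval t)).mulVec x = 0) → x = 0) ∧
    E = {x : Fin n → ℝ | ∀ t ∈ Set.Icc (-1 : ℝ) 1,
      x ⬝ᵥ (P.map (Polynomial.eval t)).mulVec x ≤ 1}


section GEAux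
open Polynomial Real

noncomputable def Upoly (M : ℕ) : ℝ[X] := Polynomial.Chebyshev.U ℝ (M : ℤ)
noncomputable def θn (M k : ℕ) : ℝ := k * Real.pi / (M + 1)
noncomputable def tt (M k : ℕ) : ℝ := Real.cos (θn M k)
noncomputable def qq (M k : ℕ) : ℝ[X] := Upoly M /ₘ (X - C (tt M k))
noncomputable def wP (M : ℕ) : ℝ[X] := C (1/(2*((M:ℝ)+1)^2)) * ((1 + X) * (Upoly M)^2)
noncomputable def wM (M : ℕ) : ℝ[X] := C (1/(2*((M:ℝ)+1)^2)) * ((1 - X) * (Upoly M)^2)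
noncomputable def wI (M k : ℕ) : ℝ[X] :=
  C (1/((M:ℝ)+1)^2) * ((1 - X^2) * ((1 - C (tt M k) * X) * (qq M k)^2))
noncomputable def ww (M k : ℕ) : ℝ[X] :=
  if k = 0 then wP M else if k = M+1 then wM M else wI M k

lemma Upoly_add_two (M : ℕ) : Upoly (M+2) = 2 * X * Upoly (M+1) - Upoly M := by
  have := Polynomial.Chebyshev.U_add_two ℝ (M : ℤ)
  have e2 : ((M:ℤ)+2) = ((M+2 : ℕ) : ℤ) := by push_cast; ring
  have e1 : ((M:ℤ)+1) = ((M+1 : ℕ) : ℤ) := by push_cast; ring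
  rw [e1, e2] at this
  simpa [Upoly] using this

lemma natDegree_Upoly_le (M : ℕ) : (Upoly M).natDegree ≤ M := by
  induction M using Nat.strong_induction_on with
  | _ M ih =>
    match M with
    | 0 => simp [Upoly, Polynomial.Chebyshev.U_zero]
    | 1 => simp [Upoly, Polynomial.Chebyshev.U_one]
      
    | (M+2) =>
      rw [Upoly_add_two]
      refine le_trans (natDegree_sub_le _ _) ?_
      have h1 : (2 * X * Upoly (M+1)).natDegree ≤ M + 2 := by
        refine le_trans (natDegree_mul_le) ?_
        have : (2 * X : ℝ[X]).natDegree ≤ 1 := by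
          refine le_trans (natDegree_mul_le) ?_
          simp
        have h2 := ih (M+1) (by omega)
        omega
      have h2 : (Upoly M).natDegree ≤ M + 2 := le_trans (ih M (by omega)) (by omega)
      omega

lemma Upoly_eval_one (M : ℕ) : (Upoly M).eval 1 = M + 1 := by
  induction M using Nat.strong_induction_on with
  | _ M ih =>
    match M with
    | 0 => simp [Upoly, Polynomial.Chebyshev.U_zero]
    | 1 => simp [Upoly, Polynomial.Chebyshev.U_one]; norm_num
    | (M+2) =>
      rw [Upoly_add_two]
      have h1 := ih (M+1) (by omega)
      have h2 := ih M (by omega)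
      simp [h1, h2]
      push_cast
      ring

lemma Upoly_eval_neg_one (M : ℕ) : (Upoly M).eval (-1) = (-1)^M * (M + 1) := by
  induction M using Nat.strong_induction_on with
  | _ M ih =>
    match M with
    | 0 => simp [Upoly, Polynomial.Chebyshev.U_zero]
    | 1 => simp [Upoly, Polynomial.Chebyshev.U_one]; norm_num
    | (M+2) =>
      rw [Upoly_add_two]
      have h1 := ih (M+1) (by omega)
      have h2 := ih M (by omega)
      simp [h1, h2]
      push_cast
      ring

lemma Upoly_cos (M : ℕ) (θ : ℝ) : (Upoly M).eval (Real.cos θ) * Real.sin θ = Real.sin ((M+1) * θ) := by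
  have := Polynomial.Chebyshev.U_real_cos θ (M : ℤ)
  rw [Upoly]
  rw [this]
  norm_num

lemma θn_mem (M : ℕ) {k : ℕ} (hk : k ≤ M + 1) : θn M k ∈ Set.Icc 0 Real.pi := by
  constructor
  · apply div_nonneg (by positivity) (by positivity)
  · rw [θn, div_le_iff₀ (by positivity)]
    have : (k : ℝ) ≤ M + 1 := by exact_mod_cast hk
    nlinarith [Real.pi_pos]

lemma tt_zero (M : ℕ) : tt M 0 = 1 := by simp [tt, θn]

lemma tt_last (M : ℕ) : tt M (M+1) = -1 := by
  have : θn M (M+1) = Real.pi := by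
    rw [θn]; push_cast; field_simp
  rw [tt, this, Real.cos_pi]

lemma tt_inj (M : ℕ) {k j : ℕ} (hk : k ≤ M + 1) (hj : j ≤ M + 1) (h : k ≠ j) :
    tt M k ≠ tt M j := by
  have hinj := Real.injOn_cos
  intro he
  have : θn M k = θn M j := hinj (θn_mem M hk) (θn_mem M hj) he
  rw [θn, θn] at this
  have hpi := Real.pi_pos
  have : (k : ℝ) = j := by
    field_simp at this
    linarith
  exact h (by exact_mod_cast this)

lemma sin_θn_pos (M : ℕ) {k : ℕ} (hk1 : 1 ≤ k) (hk2 : k ≤ M) : 0 < Real.sin (θn M k) := by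
  apply Real.sin_pos_of_pos_of_lt_pi
  · rw [θn]
    have : (0:ℝ) < k := by exact_mod_cast hk1
    positivity
  · rw [θn, div_lt_iff₀ (by positivity)]
    have : (k : ℝ) < M + 1 := by exact_mod_cast Nat.lt_succ_of_le hk2
    nlinarith [Real.pi_pos]

lemma Upoly_root (M : ℕ) {k : ℕ} (hk1 : 1 ≤ k) (hk2 : k ≤ M) : (Upoly M).eval (tt M k) = 0 := by
  have h := Upoly_cos M (θn M k)
  have hs : Real.sin ((M+1) * θn M k) = 0 := by
    have : ((M:ℝ)+1) * θn M k = k * Real.pi := by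
      rw [θn]; field_simp
    rw [this]
    exact Real.sin_nat_mul_pi k
  have hsn := sin_θn_pos M hk1 hk2
  rw [hs] at h
  have := mul_eq_zero.mp h
  rcases this with h1 | h2
  · exact h1
  · exact absurd h2 (ne_of_gt hsn)

lemma tt_mem (M k : ℕ) : tt M k ∈ Set.Icc (-1:ℝ) 1 := ⟨Real.neg_one_le_cos _, Real.cos_le_one _⟩

lemma d1 (M : ℕ) (θ : ℝ) :
    (Upoly M).eval (Real.cos θ) * Real.cos θ
      - (derivative (Upoly M)).eval (Real.cos θ) * Real.sin θ ^ 2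
    = ((M:ℝ)+1) * Real.cos (((M:ℝ)+1) * θ) := by
  have hU := Polynomial.hasDerivAt (Upoly M) (Real.cos θ)
  have hc := Real.hasDerivAt_cos θ
  have hcomp := hU.comp θ hc
  have hf := hcomp.mul (Real.hasDerivAt_sin θ)
  have hfe : (fun θ : ℝ => ((fun x => (Upoly M).eval x) ∘ Real.cos) θ * Real.sin θ)
      = fun θ : ℝ => Real.sin (((M:ℝ)+1) * θ) := by
    funext x
    simpa using Upoly_cos M x
  change HasDerivAt (fun θ : ℝ => ((fun x => (Upoly M).eval x) ∘ Real.cos) θ * Real.sin θ) _ θ at hf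
  rw [hfe] at hf
  have hg : HasDerivAt (fun θ : ℝ => Real.sin (((M:ℝ)+1) * θ))
      (Real.cos (((M:ℝ)+1) * θ) * (((M:ℝ)+1) * 1)) θ :=
    (Real.hasDerivAt_sin (((M:ℝ)+1) * θ)).comp θ ((hasDerivAt_id θ).const_mul ((M:ℝ)+1))
  have := hf.unique hg
  simp only [Function.comp] at this
  nlinarith [this, Real.sin_sq_add_cos_sq θ]

lemma d2 (M : ℕ) (θ : ℝ) :
    (derivative (derivative (Upoly M))).eval (Real.cos θ) * Real.sin θ ^ 3
      - 3 * (derivative (Upoly M)).eval (Real.cos θ) * Real.sin θ * Real.cos θ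
      - (Upoly M).eval (Real.cos θ) * Real.sin θ
    = -(((M:ℝ)+1)^2 * Real.sin (((M:ℝ)+1) * θ)) := by
  -- differentiate d1
  have hU := Polynomial.hasDerivAt (Upoly M) (Real.cos θ)
  have hU' := Polynomial.hasDerivAt (derivative (Upoly M)) (Real.cos θ)
  have hc := Real.hasDerivAt_cos θ
  have hs := Real.hasDerivAt_sin θ
  have h1 : HasDerivAt (fun θ : ℝ => (Upoly M).eval (Real.cos θ) * Real.cos θ)
      ((derivative (Upoly M)).eval (Real.cos θ) * (-Real.sin θ) * Real.cos θ
        + (Upoly M).eval (Real.cos θ) * (-Real.sin θ)) θ :=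
    (hU.comp θ hc).mul hc
  have h2 : HasDerivAt (fun θ : ℝ => (derivative (Upoly M)).eval (Real.cos θ) * Real.sin θ ^ 2)
      ((derivative (derivative (Upoly M))).eval (Real.cos θ) * (-Real.sin θ) * Real.sin θ ^ 2
        + (derivative (Upoly M)).eval (Real.cos θ) * (2 * Real.sin θ ^ 1 * Real.cos θ)) θ :=
    (hU'.comp θ hc).mul (hs.pow 2)
  have hf := h1.sub h2
  have hfe : (fun θ : ℝ => (Upoly M).eval (Real.cos θ) * Real.cos θ
      - (derivative (Upoly M)).eval (Real.cos θ) * Real.sin θ ^ 2)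
      = fun θ : ℝ => ((M:ℝ)+1) * Real.cos (((M:ℝ)+1) * θ) := funext (d1 M)
  change HasDerivAt (fun θ : ℝ => (Upoly M).eval (Real.cos θ) * Real.cos θ
      - (derivative (Upoly M)).eval (Real.cos θ) * Real.sin θ ^ 2) _ θ at hf
  rw [hfe] at hf
  have hg : HasDerivAt (fun θ : ℝ => ((M:ℝ)+1) * Real.cos (((M:ℝ)+1) * θ))
      (-Real.sin (((M:ℝ)+1) * θ) * (((M:ℝ)+1) * 1) * (((M:ℝ)+1))) θ := by
    have := ((Real.hasDerivAt_cos (((M:ℝ)+1) * θ)).comp θ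
      ((hasDerivAt_id θ).const_mul ((M:ℝ)+1))).const_mul ((M:ℝ)+1)
    simpa [mul_comm, mul_assoc, mul_left_comm] using this
  have := hf.unique hg
  nlinarith [this]

lemma tt_def (M k : ℕ) : tt M k = Real.cos (θn M k) := rfl

lemma Nθn (M k : ℕ) : ((M:ℝ)+1) * θn M k = k * Real.pi := by
  rw [θn]; field_simp

lemma cos_Nθn (M k : ℕ) : Real.cos (((M:ℝ)+1) * θn M k) = (-1)^k := by
  rw [Nθn]
  simpa using Real.cos_add_nat_mul_pi 0 k

lemma sin_Nθn (M k : ℕ) : Real.sin (((M:ℝ)+1) * θn M k) = 0 := by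
  rw [Nθn]; exact Real.sin_nat_mul_pi k

lemma sin_sq_θn (M k : ℕ) : Real.sin (θn M k) ^ 2 = 1 - tt M k ^ 2 := by
  have := Real.sin_sq_add_cos_sq (θn M k); rw [tt]; nlinarith

lemma nA (M : ℕ) {k : ℕ} (hk1 : 1 ≤ k) (hk2 : k ≤ M) :
    (derivative (Upoly M)).eval (tt M k) * (1 - tt M k ^ 2) = -(((M:ℝ)+1) * (-1)^k) := by
  have h := d1 M (θn M k)
  rw [← tt_def] at h
  rw [Upoly_root M hk1 hk2, cos_Nθn, sin_sq_θn] at h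
  · linarith [h]

lemma nB (M : ℕ) {k : ℕ} (hk1 : 1 ≤ k) (hk2 : k ≤ M) :
    (derivative (derivative (Upoly M))).eval (tt M k) * (1 - tt M k ^ 2)
      = 3 * tt M k * (derivative (Upoly M)).eval (tt M k) := by
  have h := d2 M (θn M k)
  rw [← tt_def] at h
  rw [Upoly_root M hk1 hk2, sin_Nθn] at h
  have hs := sin_θn_pos M hk1 hk2
  have hsq := sin_sq_θn M k
  have h' : Real.sin (θn M k) * ((derivative (derivative (Upoly M))).eval (tt M k) * Real.sin (θn M k)^2
      - 3 * (derivative (Upoly M)).eval (tt M k) * Real.cos (θn M k)) = 0 := by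
    rw [tt] at *; nlinarith [h]
  have := (mul_eq_zero.mp h').resolve_left (ne_of_gt hs)
  rw [hsq] at this
  rw [tt] at *
  nlinarith [this]

lemma qq_fac (M : ℕ) {k : ℕ} (hk1 : 1 ≤ k) (hk2 : k ≤ M) :
    (X - C (tt M k)) * qq M k = Upoly M :=
  mul_divByMonic_eq_iff_isRoot.mpr (Upoly_root M hk1 hk2)

lemma qq_eval (M : ℕ) {k : ℕ} (hk1 : 1 ≤ k) (hk2 : k ≤ M) :
    (qq M k).eval (tt M k) = (derivative (Upoly M)).eval (tt M k) := by
  have h := congrArg derivative (qq_fac M hk1 hk2)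
  rw [derivative_mul] at h
  have := congrArg (Polynomial.eval (tt M k)) h
  have h2 := this
  simp at h2
  linarith [h2]

lemma qq_deriv_eval (M : ℕ) {k : ℕ} (hk1 : 1 ≤ k) (hk2 : k ≤ M) :
    2 * (derivative (qq M k)).eval (tt M k) = (derivative (derivative (Upoly M))).eval (tt M k) := by
  have h := congrArg derivative (qq_fac M hk1 hk2)
  rw [derivative_mul] at h
  have h2 := congrArg derivative h
  rw [derivative_add, derivative_mul] at h2
  have := congrArg (Polynomial.eval (tt M k)) h2
  simp [derivative_sub, derivative_X, derivative_C] at this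
  linarith [this]

lemma one_sub_sq_pos (M : ℕ) {k : ℕ} (hk1 : 1 ≤ k) (hk2 : k ≤ M) : 0 < 1 - tt M k ^ 2 := by
  have h := sin_sq_θn M k
  have := sin_θn_pos M hk1 hk2
  nlinarith

lemma wP_eval_one (M : ℕ) : (wP M).eval 1 = 1 := by
  simp [wP, Upoly_eval_one M]
  field_simp
  ring

lemma wP_eval_neg_one (M : ℕ) : (wP M).eval (-1) = 0 := by simp [wP]

lemma wM_eval_one (M : ℕ) : (wM M).eval 1 = 0 := by simp [wM]

lemma wM_eval_neg_one (M : ℕ) : (wM M).eval (-1) = 1 := by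
  simp [wM, Upoly_eval_neg_one M]
  have : ((-1:ℝ)^M * (M+1))^2 = ((M:ℝ)+1)^2 := by
    rw [mul_pow, ← pow_mul, mul_comm M 2, pow_mul]
    norm_num
  rw [this]
  field_simp
  ring

lemma wP_eval_int (M : ℕ) {k : ℕ} (hk1 : 1 ≤ k) (hk2 : k ≤ M) : (wP M).eval (tt M k) = 0 := by
  simp [wP, Upoly_root M hk1 hk2]

lemma wM_eval_int (M : ℕ) {k : ℕ} (hk1 : 1 ≤ k) (hk2 : k ≤ M) : (wM M).eval (tt M k) = 0 := by
  simp [wM, Upoly_root M hk1 hk2]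

lemma wI_eval_one (M k : ℕ) : (wI M k).eval 1 = 0 := by simp [wI]

lemma wI_eval_neg_one (M k : ℕ) : (wI M k).eval (-1) = 0 := by simp [wI]

lemma qq_root_other (M : ℕ) {k j : ℕ} (hk1 : 1 ≤ k) (hk2 : k ≤ M) (hj1 : 1 ≤ j) (hj2 : j ≤ M)
    (hne : j ≠ k) : (qq M k).eval (tt M j) = 0 := by
  have h := congrArg (Polynomial.eval (tt M j)) (qq_fac M hk1 hk2)
  simp at h
  rw [Upoly_root M hj1 hj2] at h
  have hne' : tt M j - tt M k ≠ 0 := sub_ne_zero.mpr (tt_inj M (by omega) (by omega) hne)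
  rcases mul_eq_zero.mp h with h1 | h2
  · exact absurd h1 hne'
  · exact h2

lemma wI_eval_other (M : ℕ) {k j : ℕ} (hk1 : 1 ≤ k) (hk2 : k ≤ M) (hj1 : 1 ≤ j) (hj2 : j ≤ M)
    (hne : j ≠ k) : (wI M k).eval (tt M j) = 0 := by
  simp [wI, qq_root_other M hk1 hk2 hj1 hj2 hne]

lemma wI_eval_self (M : ℕ) {k : ℕ} (hk1 : 1 ≤ k) (hk2 : k ≤ M) : (wI M k).eval (tt M k) = 1 := by
  have hA := nA M hk1 hk2
  have hq := qq_eval M hk1 hk2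
  have hpos := one_sub_sq_pos M hk1 hk2
  have hM : ((M:ℝ)+1) ≠ 0 := by positivity
  simp [wI]
  set c := tt M k
  set A := (derivative (Upoly M)).eval c
  rw [hq]
  have h2 : ((-1:ℝ)^k)^2 = 1 := by
    rcases Nat.even_or_odd k with he | ho
    · rw [he.neg_one_pow]; norm_num
    · rw [ho.neg_one_pow]; norm_num
  have key : (1 - c^2)^2 * A^2 = ((M:ℝ)+1)^2 := by
    have := congrArg (· ^ 2) hA
    simp at this
    nlinarith [this]
  field_simp
  nlinarith [key]

lemma sq_dvd_of_root_of_deriv_root {p : ℝ[X]} {a : ℝ} (h0 : p.eval a = 0)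
    (h1 : (derivative p).eval a = 0) : (X - C a)^2 ∣ p := by
  have hroot : IsRoot p a := h0
  have hfac := (mul_divByMonic_eq_iff_isRoot (p := p) (a := a)).mpr hroot
  set q := p /ₘ (X - C a) with hq
  have hd : derivative p = q + (X - C a) * derivative q := by
    rw [← hfac, derivative_mul]
    simp
  have hqa : q.eval a = 0 := by
    have := congrArg (Polynomial.eval a) hd
    simpa [h1] using this.symm
  have : (X - C a) ∣ q := dvd_iff_isRoot.mpr hqa
  obtain ⟨r, hr⟩ := this
  exact ⟨r, by rw [← hfac, hr]; ring⟩

lemma wI_deriv_self (M : ℕ) {k : ℕ} (hk1 : 1 ≤ k) (hk2 : k ≤ M) :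
    (derivative (wI M k)).eval (tt M k) = 0 := by
  have h1 : 2 * (derivative (qq M k)).eval (tt M k) * (1 - tt M k ^ 2)
      = 3 * tt M k * (qq M k).eval (tt M k) := by
    rw [qq_deriv_eval M hk1 hk2, qq_eval M hk1 hk2]
    exact nB M hk1 hk2
  simp [wI, derivative_mul, derivative_pow]
  refine Or.inr ?_
  set c := tt M k
  set A := (qq M k).eval c with hA
  set B := (derivative (qq M k)).eval c with hB
  linear_combination ((1 - c^2) * A) * h1

lemma sq_dvd_wI_sub_one (M : ℕ) {k : ℕ} (hk1 : 1 ≤ k) (hk2 : k ≤ M) :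
    (X - C (tt M k))^2 ∣ (wI M k - 1) := by
  apply sq_dvd_of_root_of_deriv_root
  · simp [wI_eval_self M hk1 hk2]
  · simp [wI_deriv_self M hk1 hk2]

lemma ww_eval (M : ℕ) {j k : ℕ} (hj : j ≤ M+1) (hk : k ≤ M+1) :
    (ww M j).eval (tt M k) = if j = k then 1 else 0 := by
  rcases eq_or_ne j k with rfl | hne
  · rw [if_pos rfl]
    unfold ww
    rcases eq_or_ne j 0 with rfl | hj0
    · rw [if_pos rfl, tt_zero, wP_eval_one]
    · rcases eq_or_ne j (M+1) with rfl | hjL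
      · rw [if_neg hj0, if_pos rfl, tt_last, wM_eval_neg_one]
      · rw [if_neg hj0, if_neg hjL]
        exact wI_eval_self M (by omega) (by omega)
  · rw [if_neg hne]
    unfold ww
    rcases eq_or_ne j 0 with rfl | hj0
    · rw [if_pos rfl]
      rcases eq_or_ne k (M+1) with rfl | hkL
      · rw [tt_last]; exact wP_eval_neg_one M
      · exact wP_eval_int M (by omega) (by omega)
    · rcases eq_or_ne j (M+1) with rfl | hjL
      · rw [if_neg hj0, if_pos rfl]
        rcases eq_or_ne k 0 with rfl | hk0
        · rw [tt_zero]; exact wM_eval_one M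
        · exact wM_eval_int M (by omega) (by omega)
      · rw [if_neg hj0, if_neg hjL]
        rcases eq_or_ne k 0 with rfl | hk0
        · rw [tt_zero]; exact wI_eval_one M j
        · rcases eq_or_ne k (M+1) with rfl | hkL
          · rw [tt_last]; exact wI_eval_neg_one M j
          · exact wI_eval_other M (by omega) (by omega) (by omega) (by omega) (Ne.symm hne)

lemma natDegree_qq_le (M k : ℕ) : (qq M k).natDegree ≤ M - 1 := by
  rw [qq, natDegree_divByMonic _ (monic_X_sub_C _)]
  have := natDegree_Upoly_le M
  simp
  omega

lemma natDegree_ww_le (M : ℕ) {k : ℕ} (hk : k ≤ M + 1) : (ww M k).natDegree ≤ 2*M+1 := by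
  have hU2 : ((Upoly M)^2).natDegree ≤ 2*M := by
    refine le_trans (natDegree_pow_le) ?_
    have := natDegree_Upoly_le M
    omega
  have h1X : ((1 + X : ℝ[X])).natDegree ≤ 1 := le_trans (natDegree_add_le _ _) (by simp)
  have h1X' : ((1 - X : ℝ[X])).natDegree ≤ 1 := le_trans (natDegree_sub_le _ _) (by simp)
  unfold ww
  rcases eq_or_ne k 0 with rfl | hk0
  · rw [if_pos rfl, wP]
    refine le_trans natDegree_mul_le ?_
    rw [natDegree_C, zero_add]
    exact le_trans natDegree_mul_le (by omega)
  · rcases eq_or_ne k (M+1) with rfl | hkL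
    · rw [if_neg hk0, if_pos rfl, wM]
      refine le_trans natDegree_mul_le ?_
      rw [natDegree_C, zero_add]
      exact le_trans natDegree_mul_le (by omega)
    · rw [if_neg hk0, if_neg hkL, wI]
      have hM1 : 1 ≤ M := by omega
      have hq : ((qq M k)^2).natDegree ≤ 2*(M-1) := by
        refine le_trans natDegree_pow_le ?_
        have := natDegree_qq_le M k
        omega
      have hlin : ((1 - C (tt M k) * X : ℝ[X])).natDegree ≤ 1 := by
        refine le_trans (natDegree_sub_le _ _) ?_
        simp
        exact le_trans natDegree_mul_le (by simp)
      refine le_trans natDegree_mul_le ?_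
      have h2 : ((1 - X^2 : ℝ[X])).natDegree ≤ 2 := by
        refine le_trans (natDegree_sub_le _ _) ?_
        simp [natDegree_X_pow]
      have h3 : ((1 - C (tt M k) * X) * (qq M k)^2).natDegree ≤ 2*(M-1)+1 :=
        le_trans natDegree_mul_le (by omega)
      have h4 : ((1 - X^2) * ((1 - C (tt M k) * X) * (qq M k)^2)).natDegree ≤ 2*(M-1)+3 :=
        le_trans natDegree_mul_le (by omega)
      simp only [natDegree_C]
      omega

lemma sum_ww (M : ℕ) : ∑ k ∈ Finset.range (M+2), ww M k = 1 := by
  set s : ℝ[X] := (∑ k ∈ Finset.range (M+2), ww M k) - 1 with hs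
  suffices hs0 : s = 0 by
    have := hs0
    rw [hs, sub_eq_zero] at this
    exact this
  by_contra hne
  -- degree bound
  have hdeg : s.natDegree ≤ 2*M+1 := by
    rw [hs]
    refine le_trans (natDegree_sub_le _ _) ?_
    simp only [natDegree_one]
    have : (∑ k ∈ Finset.range (M+2), ww M k).natDegree ≤ 2*M+1 := by
      refine natDegree_sum_le_of_forall_le _ _ ?_
      intro i hi
      exact natDegree_ww_le M (by simp at hi; omega)
    omega
  -- divisor
  set ee : ℕ → ℕ := fun k => if k = 0 ∨ k = M+1 then 1 else 2 with hee
  set D : ℝ[X] := ∏ k ∈ Finset.range (M+2), (X - C (tt M k))^(ee k) with hD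
  have hdvd : D ∣ s := by
    rw [hD]
    refine Finset.prod_dvd_of_coprime ?_ ?_
    · intro a ha b hb hab
      simp only [Function.onFun]
      apply IsCoprime.pow
      apply Polynomial.isCoprime_X_sub_C_of_isUnit_sub
      refine isUnit_iff_ne_zero.mpr (sub_ne_zero.mpr ?_)
      simp only [Finset.coe_range, Set.mem_Iio] at ha hb
      exact tt_inj M (by omega) (by omega) hab
    · intro k hk
      simp only [Finset.mem_range] at hk
      rcases eq_or_ne k 0 with rfl | hk0
      · have : ee 0 = 1 := by simp [hee]
        rw [this, pow_one]
        rw [dvd_iff_isRoot]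
        have : IsRoot s (tt M 0) := by
          simp only [IsRoot, hs, eval_sub, eval_one, eval_finset_sum]
          have : ∀ j ∈ Finset.range (M+2), (ww M j).eval (tt M 0) = if j = 0 then 1 else 0 := by
            intro j hj
            simp only [Finset.mem_range] at hj
            exact ww_eval M (by omega) (by omega)
          rw [Finset.sum_congr rfl this, Finset.sum_ite_eq' (Finset.range (M+2)) 0 (fun _ => (1:ℝ))]
          simp
        exact this
      · rcases eq_or_ne k (M+1) with rfl | hkL
        · have : ee (M+1) = 1 := by simp [hee]
          rw [this, pow_one, dvd_iff_isRoot]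
          simp only [IsRoot, hs, eval_sub, eval_one, eval_finset_sum]
          have : ∀ j ∈ Finset.range (M+2), (ww M j).eval (tt M (M+1)) = if j = M+1 then 1 else 0 := by
            intro j hj
            simp only [Finset.mem_range] at hj
            exact ww_eval M (by omega) (by omega)
          rw [Finset.sum_congr rfl this,
            Finset.sum_ite_eq' (Finset.range (M+2)) (M+1) (fun _ => (1:ℝ))]
          simp
        · have heek : ee k = 2 := by simp [hee, hk0, hkL]
          rw [heek]
          have hk1 : 1 ≤ k := by omega
          have hk2 : k ≤ M := by omega
          have hsplit : s = (ww M k - 1) + ∑ j ∈ (Finset.range (M+2)).erase k, ww M j := by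
            rw [hs, ← Finset.add_sum_erase _ _ (Finset.mem_range.mpr hk)]
            ring
          rw [hsplit]
          apply dvd_add
          · have : ww M k = wI M k := by simp [ww, hk0, hkL]
            rw [this]
            exact sq_dvd_wI_sub_one M hk1 hk2
          · apply Finset.dvd_sum
            intro j hj
            have hjk : j ≠ k := (Finset.mem_erase.mp hj).1
            have hjr : j < M + 2 := Finset.mem_range.mp (Finset.mem_erase.mp hj).2
            have hdvdU : (X - C (tt M k)) ∣ Upoly M :=
              dvd_iff_isRoot.mpr (Upoly_root M hk1 hk2)
            have hdvdU2 : (X - C (tt M k))^2 ∣ (Upoly M)^2 := pow_dvd_pow_of_dvd hdvdU 2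
            unfold ww
            rcases eq_or_ne j 0 with rfl | hj0
            · rw [if_pos rfl, wP]
              exact Dvd.dvd.mul_left hdvdU2 _ |>.mul_left _
            · rcases eq_or_ne j (M+1) with rfl | hjL
              · rw [if_neg hj0, if_pos rfl, wM]
                exact Dvd.dvd.mul_left hdvdU2 _ |>.mul_left _
              · rw [if_neg hj0, if_neg hjL, wI]
                have : (X - C (tt M k)) ∣ qq M j :=
                  dvd_iff_isRoot.mpr (qq_root_other M (by omega) (by omega) hk1 hk2 (Ne.symm hjk))
                have h2 : (X - C (tt M k))^2 ∣ (qq M j)^2 := pow_dvd_pow_of_dvd this 2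
                exact ((h2.mul_left _).mul_left _).mul_left _
  -- degree of D
  have hDdeg : D.natDegree = 2*M+2 := by
    rw [hD, natDegree_prod_of_monic]
    · have : ∀ k ∈ Finset.range (M+2), ((X - C (tt M k))^(ee k)).natDegree = ee k := by
        intro k _
        rw [natDegree_pow, natDegree_X_sub_C, mul_one]
      rw [Finset.sum_congr rfl this]
      rw [Finset.sum_range_succ, Finset.sum_range_succ']
      have h1 : ee (M+1) = 1 := by simp [hee]
      have h0 : ee 0 = 1 := by simp [hee]
      have h2 : ∀ i ∈ Finset.range M, ee (i+1) = 2 := by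
        intro i hi
        simp only [Finset.mem_range] at hi
        simp only [hee]
        rw [if_neg (by omega)]
      rw [Finset.sum_congr rfl h2]
      simp [Finset.sum_const]
      omega
    · intro k _
      exact (monic_X_sub_C _).pow _
  have := Polynomial.natDegree_le_of_dvd hdvd hne
  omega

lemma ww_nonneg (M : ℕ) {k : ℕ} (hk : k ≤ M+1) {t : ℝ} (ht : t ∈ Set.Icc (-1:ℝ) 1) :
    0 ≤ (ww M k).eval t := by
  obtain ⟨h1, h2⟩ := ht
  have hM : (0:ℝ) < ((M:ℝ)+1)^2 := by positivity
  unfold ww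
  rcases eq_or_ne k 0 with rfl | hk0
  · rw [if_pos rfl, wP]
    simp only [eval_mul, eval_C, eval_add, eval_one, eval_X, eval_pow]
    apply mul_nonneg (by positivity)
    exact mul_nonneg (by linarith) (sq_nonneg _)
  · rcases eq_or_ne k (M+1) with rfl | hkL
    · rw [if_neg hk0, if_pos rfl, wM]
      simp only [eval_mul, eval_C, eval_sub, eval_one, eval_X, eval_pow]
      apply mul_nonneg (by positivity)
      exact mul_nonneg (by linarith) (sq_nonneg _)
    · rw [if_neg hk0, if_neg hkL, wI]
      simp only [eval_mul, eval_C, eval_sub, eval_one, eval_X, eval_pow]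
      apply mul_nonneg (by positivity)
      obtain ⟨hc1, hc2⟩ := tt_mem M k
      refine mul_nonneg (by nlinarith) (mul_nonneg (by nlinarith) (sq_nonneg _))

end GEAux

/-- for `m ≥ 2` positive semidefinite matrices `P₁, …, P_m`, if the
intersection `T = ⋂ᵢ {x : xᵀPᵢx ≤ 1}` of the corresponding semiellipsoids is compact, then
`T` is a generalized ellipsoid of degree `d` for some `d ≤ 2m - 3`. -/
theorem stmt_11 {n m : ℕ} (hm : 2 ≤ m) (P : Fin m → Matrix (Fin n) (Fin n) ℝ)
    (hP : ∀ i, (P i).PosSemidef)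
    (hT : IsCompact (⋂ i : Fin m, {x : Fin n → ℝ | x ⬝ᵥ (P i).mulVec x ≤ 1})) :
    ∃ d : ℕ, d ≤ 2 * m - 3 ∧
      IsGE n d (⋂ i : Fin m, {x : Fin n → ℝ | x ⬝ᵥ (P i).mulVec x ≤ 1}) := by
  obtain ⟨M, rfl⟩ : ∃ M, m = M + 2 := ⟨m - 2, by omega⟩
  refine ⟨2*M+1, by omega, ?_⟩
  set T := ⋂ i : Fin (M+2), {x : Fin n → ℝ | x ⬝ᵥ (P i).mulVec x ≤ 1} with hTdef
  set Pm : Matrix (Fin n) (Fin n) ℝ[X] :=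
    fun i j => ∑ k : Fin (M+2), ww M (k:ℕ) * C (P k i j) with hPm
  have hkle : ∀ k : Fin (M+2), (k:ℕ) ≤ M + 1 := fun k => by omega
  -- evaluated matrix
  have hEval : ∀ t : ℝ, Pm.map (Polynomial.eval t)
      = ∑ k : Fin (M+2), ((ww M (k:ℕ)).eval t) • (P k) := by
    intro t
    ext i j
    rw [Matrix.map_apply]
    simp [hPm, Matrix.map_apply, Matrix.sum_apply, eval_finset_sum]
  -- eval at node = P k
  have hNode : ∀ k : Fin (M+2), Pm.map (Polynomial.eval (tt M (k:ℕ))) = P k := by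
    intro k
    rw [hEval]
    have : ∀ j : Fin (M+2), ((ww M (j:ℕ)).eval (tt M (k:ℕ))) • (P j)
        = if j = k then P k else 0 := by
      intro j
      rw [ww_eval M (hkle j) (hkle k)]
      rcases eq_or_ne j k with rfl | hne
      · simp
      · rw [if_neg (fun h => hne (Fin.val_injective h)), if_neg hne, zero_smul]
    rw [Finset.sum_congr rfl (fun j _ => this j)]
    simp
  -- sum of weights = 1
  have hsum1 : ∀ t : ℝ, ∑ k : Fin (M+2), (ww M (k:ℕ)).eval t = 1 := by
    intro t
    have := congrArg (Polynomial.eval t) (sum_ww M)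
    rw [eval_finset_sum] at this
    simpa [Finset.sum_range fun k => (ww M k).eval t] using this
  -- linear functional
  have hQuad : ∀ (t : ℝ) (x : Fin n → ℝ), x ⬝ᵥ (Pm.map (Polynomial.eval t)).mulVec x
      = ∑ k : Fin (M+2), ((ww M (k:ℕ)).eval t) * (x ⬝ᵥ (P k).mulVec x) := by
    intro t x
    rw [hEval]
    have key : ∀ (s : Finset (Fin (M+2))),
        x ⬝ᵥ (∑ k ∈ s, ((ww M (k:ℕ)).eval t) • (P k)).mulVec x
          = ∑ k ∈ s, ((ww M (k:ℕ)).eval t) * (x ⬝ᵥ (P k).mulVec x) := by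
      intro s
      induction s using Finset.induction_on with
      | empty => simp
      | insert _ _ hmem ih =>
        rw [Finset.sum_insert hmem, Finset.sum_insert hmem, Matrix.add_mulVec, dotProduct_add,
          Matrix.smul_mulVec, dotProduct_smul, smul_eq_mul, ih]
    exact key Finset.univ
  -- nonneg of weights on Icc
  refine ⟨Pm, ?_, ?_, ?_, ?_, ?_⟩
  · -- IsSymm
    refine Matrix.ext fun i j => ?_
    show Pm j i = Pm i j
    simp only [Matrix.transpose_apply, hPm]
    refine Finset.sum_congr rfl fun k _ => ?_
    have h1 := congrFun (congrFun (hP k).1 j) i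
    rw [Matrix.conjTranspose_apply] at h1
    simp only [star_trivial] at h1
    rw [h1]
  · -- degree
    intro i j
    simp only [hPm]
    refine natDegree_sum_le_of_forall_le _ _ fun k _ => ?_
    refine le_trans natDegree_mul_le ?_
    rw [natDegree_C]
    exact le_trans (le_of_eq (add_zero _)) (natDegree_ww_le M (hkle k))
  · -- PosSemidef
    intro t ht
    refine Matrix.PosSemidef.of_dotProduct_mulVec_nonneg ?_ ?_
    · rw [hEval]
      show (∑ k : Fin (M+2), ((ww M (k:ℕ)).eval t) • (P k))ᴴ = _
      rw [Matrix.conjTranspose_sum]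
      refine Finset.sum_congr rfl fun k _ => ?_
      rw [Matrix.conjTranspose_smul, (hP k).1]
      simp
    · intro y
      have hy : star y = y := by funext i; simp
      rw [hy, hQuad]
      refine Finset.sum_nonneg fun k _ => ?_
      refine mul_nonneg (ww_nonneg M (hkle k) ht) ?_
      have := (hP k).dotProduct_mulVec_nonneg y
      rwa [hy] at this
  · -- kernel
    intro x hx
    have hk0 : ∀ k : Fin (M+2), (P k).mulVec x = 0 := fun k => by
      have := hx (tt M (k:ℕ)) (tt_mem M (k:ℕ))
      rwa [hNode k] at this
    by_contra hx0
    have hmem : ∀ c : ℝ, c • x ∈ T := by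
      intro c
      rw [hTdef]
      refine Set.mem_iInter.mpr fun k => ?_
      show (c • x) ⬝ᵥ (P k).mulVec (c • x) ≤ 1
      rw [Matrix.mulVec_smul, hk0 k]
      simp
    obtain ⟨r, hr⟩ := hT.isBounded.exists_norm_le
    have hxn : 0 < ‖x‖ := norm_pos_iff.mpr hx0
    have h0 : (0:ℝ) ≤ r := by simpa using hr (0 • x) (hmem 0)
    have hc := hr (((r+1)/‖x‖) • x) (hmem _)
    rw [norm_smul, Real.norm_eq_abs] at hc
    have : |(r+1)/‖x‖| = (r+1)/‖x‖ := abs_of_nonneg (by positivity)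
    rw [this] at hc
    rw [div_mul_cancel₀] at hc
    · linarith
    · exact ne_of_gt hxn
  · -- set equality
    ext x
    simp only [hTdef, Set.mem_iInter, Set.mem_setOf_eq]
    constructor
    · intro hx t ht
      rw [hQuad]
      have hone : ∑ k : Fin (M+2), ((ww M (k:ℕ)).eval t) * 1 = 1 := by
        simpa using hsum1 t
      rw [← hone]
      refine Finset.sum_le_sum fun k _ => ?_
      exact mul_le_mul_of_nonneg_left (hx k) (ww_nonneg M (hkle k) ht)
    · intro hx k
      have := hx (tt M (k:ℕ)) (tt_mem M (k:ℕ))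
      rwa [hNode k] at this
end

section
/- Let m ≥ 3 be an integer and let a₂ < a₃ < ⋯ < a_{m-1} be real numbers in the open interval (-1,1) such that the polynomial ℓ(t) = ∏_{j=2}^{m-1} (t - a_j) satisfies the Legendre differential equation (1-t²)ℓ''(t) - 2tℓ'(t) + (m-2)(m-1)ℓ(t) = 0 for all t ∈ ℝ. Then for every i ∈ {2, …, m-1}, the derivative of the polynomial q_i(t) = (1-t²) · ∏_{j ∈ {2,…,m-1}, j ≠ i} (t - a_j)² vanishes at t = a_i. -/
open Polynomial

/-- let `m ≥ 3` and let `a₂ < ⋯ < a_{m-1}` (here indexed by `Fin (m-2)`) be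
reals in `(-1,1)` such that `ℓ(t) = ∏ⱼ (t - aⱼ)` satisfies the Legendre differential
equation `(1-t²)ℓ''(t) - 2tℓ'(t) + (m-2)(m-1)ℓ(t) = 0`. Then for each `i`, the derivative
of `qᵢ(t) = (1-t²)·∏_{j ≠ i} (t - aⱼ)²` vanishes at `t = aᵢ`. -/
theorem stmt_13 {m : ℕ} (hm : 3 ≤ m) (a : Fin (m - 2) → ℝ)
    (hmono : StrictMono a) (hrange : ∀ j, a j ∈ Set.Ioo (-1 : ℝ) 1)
    (hleg : ∀ t : ℝ,
      (1 - t ^ 2) *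
          Polynomial.eval t (Polynomial.derivative (Polynomial.derivative
            (∏ j : Fin (m - 2), ((Polynomial.X : Polynomial ℝ) - Polynomial.C (a j)))))
        - 2 * t *
          Polynomial.eval t (Polynomial.derivative
            (∏ j : Fin (m - 2), ((Polynomial.X : Polynomial ℝ) - Polynomial.C (a j))))
        + ((m : ℝ) - 2) * ((m : ℝ) - 1) *
          Polynomial.eval t
            (∏ j : Fin (m - 2), ((Polynomial.X : Polynomial ℝ) - Polynomial.C (a j)))
        = 0) :
    ∀ i : Fin (m - 2),
      Polynomial.eval (a i) (Polynomial.derivative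
        ((1 - (Polynomial.X : Polynomial ℝ) ^ 2) *
          ∏ j ∈ Finset.univ.erase i,
            ((Polynomial.X : Polynomial ℝ) - Polynomial.C (a j)) ^ 2)) = 0 := by
  intro i
  set P : Polynomial ℝ := ∏ j ∈ Finset.univ.erase i,
      ((Polynomial.X : Polynomial ℝ) - Polynomial.C (a j)) with hP
  have hL : (∏ j : Fin (m - 2), ((Polynomial.X : Polynomial ℝ) - Polynomial.C (a j)))
      = (Polynomial.X - Polynomial.C (a i)) * P :=
    (Finset.mul_prod_erase Finset.univ _ (Finset.mem_univ i)).symm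
  have hQ : (∏ j ∈ Finset.univ.erase i,
      ((Polynomial.X : Polynomial ℝ) - Polynomial.C (a j)) ^ 2) = P ^ 2 := by
    rw [hP, Finset.prod_pow]
  have key := hleg (a i)
  rw [hL] at key
  rw [hQ]
  simp only [derivative_mul, derivative_sub, derivative_X, derivative_C, sub_zero,
    derivative_one, derivative_pow, derivative_add, eval_add, eval_mul, eval_sub, eval_X,
    eval_C, eval_one, eval_pow, one_mul, zero_mul, mul_zero, mul_one, sub_self, zero_add,
    add_zero, zero_sub, eval_zero, eval_neg] at key ⊢
  norm_num at key ⊢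
  linear_combination Polynomial.eval (a i) P * key
end

section
/- Let m ≥ 2 be an integer and let p₁, …, p_m be univariate real polynomials satisfying: (1) pᵢ(t) ≥ 0 for all t ∈ [-1,1] and all i = 1,…,m; (2) Σ_{i=1}^m pᵢ(t) = 1 for all t ∈ [-1,1]; and (3) for every i = 1,…,m there exists tᵢ ∈ [-1,1] with pᵢ(tᵢ) = 1. Then at least one of the polynomials p₁, …, p_m has degree at least 2m-3. -/
open Polynomial

/-- for `m ≥ 2`, if univariate real polynomials `p₁, …, p_m` are nonnegative
on `[-1,1]`, sum to `1` on `[-1,1]`, and each attain the value `1` somewhere on `[-1,1]`,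
then at least one of them has degree at least `2m - 3`. -/
theorem stmt_14 {m : ℕ} (hm : 2 ≤ m) (p : Fin m → Polynomial ℝ)
    (hnonneg : ∀ i, ∀ t ∈ Set.Icc (-1 : ℝ) 1, 0 ≤ (p i).eval t)
    (hsum : ∀ t ∈ Set.Icc (-1 : ℝ) 1, ∑ i : Fin m, (p i).eval t = 1)
    (hattain : ∀ i, ∃ t ∈ Set.Icc (-1 : ℝ) 1, (p i).eval t = 1) :
    ∃ i, 2 * m - 3 ≤ (p i).natDegree := by
  classical
  choose t ht hpt using hattain
  -- all other polynomials vanish at t i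
  have hzero : ∀ i j, j ≠ i → (p j).eval (t i) = 0 := by
    intro i j hji
    have hs := hsum (t i) (ht i)
    rw [← Finset.add_sum_erase _ _ (Finset.mem_univ i), hpt i] at hs
    have hz : ∑ k ∈ Finset.univ.erase i, (p k).eval (t i) = 0 := by linarith
    exact (Finset.sum_eq_zero_iff_of_nonneg
      (fun k _ => hnonneg k (t i) (ht i))).1 hz j
      (Finset.mem_erase.2 ⟨hji, Finset.mem_univ j⟩)
  have htinj : Function.Injective t := by
    intro a b hab
    by_contra h
    have h0 := hzero b a h
    rw [← hab, hpt a] at h0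
    norm_num at h0
  have hp0 : ∀ i, p i ≠ 0 := by
    intro i h
    have := hpt i
    rw [h] at this
    norm_num at this
  -- simple roots
  have hmult1 : ∀ i j, j ≠ i → 1 ≤ (p i).rootMultiplicity (t j) := by
    intro i j hji
    exact (Polynomial.rootMultiplicity_pos (hp0 i)).2 (hzero j i (fun h => hji h.symm))
  -- interior roots are at least double
  have hmult2 : ∀ i j, j ≠ i → t j ∈ Set.Ioo (-1 : ℝ) 1 →
      2 ≤ (p i).rootMultiplicity (t j) := by
    intro i j hji htj
    have hroot : (p i).IsRoot (t j) := hzero j i (fun h => hji h.symm)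
    have hmin : IsLocalMin (fun x => (p i).eval x) (t j) := by
      filter_upwards [Ioo_mem_nhds htj.1 htj.2] with x hx
      simp only [hroot.eq_zero]
      exact hnonneg i x (Set.Ioo_subset_Icc_self hx)
    have hd := hmin.deriv_eq_zero
    rw [Polynomial.deriv] at hd
    exact (Polynomial.one_lt_rootMultiplicity_iff_isRoot (hp0 i)).2 ⟨hroot, hd⟩
  -- main degree bound given at most one non-interior root among the others
  have key : ∀ i, ((Finset.univ.erase i).filter
      (fun j => t j ∉ Set.Ioo (-1 : ℝ) 1)).card ≤ 1 → 2 * m - 3 ≤ (p i).natDegree := by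
    intro i hbad
    set s := Finset.univ.erase i with hs
    have hscard : s.card = m - 1 := by
      rw [hs, Finset.card_erase_of_mem (Finset.mem_univ i), Finset.card_univ, Fintype.card_fin]
    set e : Fin m → ℕ := fun j => if t j ∈ Set.Ioo (-1 : ℝ) 1 then 2 else 1 with he
    -- step 1 : 2m-3 ≤ ∑ e
    have h1 : 2 * m - 3 ≤ ∑ j ∈ s, e j := by
      rw [← Finset.sum_filter_add_sum_filter_not s (fun j => t j ∈ Set.Ioo (-1 : ℝ) 1)]
      have hg : ∑ j ∈ s.filter (fun j => t j ∈ Set.Ioo (-1 : ℝ) 1), e j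
          = 2 * (s.filter (fun j => t j ∈ Set.Ioo (-1 : ℝ) 1)).card := by
        rw [Finset.sum_congr rfl (fun j hj => ?_), Finset.sum_const, smul_eq_mul, mul_comm]
        simp only [he, if_pos (Finset.mem_filter.1 hj).2]
      have hb : ∑ j ∈ s.filter (fun j => t j ∉ Set.Ioo (-1 : ℝ) 1), e j
          = (s.filter (fun j => t j ∉ Set.Ioo (-1 : ℝ) 1)).card := by
        rw [Finset.sum_congr rfl (fun j hj => ?_), Finset.sum_const, smul_eq_mul, mul_one]
        simp only [he, if_neg (Finset.mem_filter.1 hj).2]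
      have hsplit := Finset.card_filter_add_card_filter_not
        (s := s) (p := fun j => t j ∈ Set.Ioo (-1 : ℝ) 1)
      rw [hg, hb]
      omega
    -- step 2 : ∑ e ≤ ∑ rootMultiplicity
    have h2 : ∑ j ∈ s, e j ≤ ∑ j ∈ s, (p i).rootMultiplicity (t j) := by
      refine Finset.sum_le_sum (fun j hj => ?_)
      have hji : j ≠ i := (Finset.mem_erase.1 hj).1
      show (if t j ∈ Set.Ioo (-1 : ℝ) 1 then 2 else 1) ≤ _
      split_ifs with hint
      · exact hmult2 i j hji hint
      · exact hmult1 i j hji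
    -- step 3 : ∑ rootMultiplicity ≤ natDegree
    have h3 : ∑ j ∈ s, (p i).rootMultiplicity (t j) ≤ (p i).natDegree := by
      have himg : ∑ j ∈ s, (p i).rootMultiplicity (t j)
          = ∑ a ∈ s.image t, (p i).rootMultiplicity a := by
        rw [Finset.sum_image (fun a _ b _ h => htinj h)]
      have hsub : s.image t ⊆ (p i).roots.toFinset := by
        intro a ha
        obtain ⟨j, hj, rfl⟩ := Finset.mem_image.1 ha
        rw [Multiset.mem_toFinset, Polynomial.mem_roots (hp0 i)]
        exact hzero j i (fun h => (Finset.mem_erase.1 hj).1 h.symm)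
      calc ∑ j ∈ s, (p i).rootMultiplicity (t j)
          = ∑ a ∈ s.image t, (p i).rootMultiplicity a := himg
        _ ≤ ∑ a ∈ (p i).roots.toFinset, (p i).rootMultiplicity a :=
            Finset.sum_le_sum_of_subset hsub
        _ = Multiset.card (p i).roots := by
            simp_rw [← Polynomial.count_roots]
            exact Multiset.toFinset_sum_count_eq _
        _ ≤ (p i).natDegree := Polynomial.card_roots' _
    omega
  -- classification of non-interior points
  have endpt : ∀ k, t k ∉ Set.Ioo (-1 : ℝ) 1 → t k = -1 ∨ t k = 1 := by
    intro k hk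
    have h1 := (ht k).1
    have h2 := (ht k).2
    simp only [Set.mem_Ioo, not_and_or, not_lt] at hk
    rcases hk with h | h
    · left; linarith
    · right; linarith
  by_cases hE : ∃ k, t k ∉ Set.Ioo (-1 : ℝ) 1
  · obtain ⟨i, hi⟩ := hE
    refine ⟨i, key i ?_⟩
    rw [Finset.card_le_one]
    intro a ha b hb
    have ha' := Finset.mem_filter.1 ha
    have hb' := Finset.mem_filter.1 hb
    have hai : t a ≠ t i := fun h => (Finset.mem_erase.1 ha'.1).1 (htinj h)
    have hbi : t b ≠ t i := fun h => (Finset.mem_erase.1 hb'.1).1 (htinj h)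
    apply htinj
    rcases endpt i hi with h | h <;> rcases endpt a ha'.2 with h1 | h1 <;>
      rcases endpt b hb'.2 with h2 | h2 <;>
      first
        | exact absurd (h1.trans h.symm) hai
        | exact absurd (h2.trans h.symm) hbi
        | rw [h1, h2]
  · push_neg at hE
    obtain ⟨i⟩ : Nonempty (Fin m) := ⟨⟨0, by omega⟩⟩
    refine ⟨i, key i ?_⟩
    rw [Finset.filter_eq_empty_iff.2 (fun j _ => not_not_intro (hE j))]
    simp
end

section
/- Every full-dimensional polytope in ℝⁿ that is symmetric about the origin is a generalized ellipsoid centered at the origin, and every finite intersection of ellipsoids centered at the origin is a generalized ellipsoid centered at the origin. Here, a full-dimensional origin-symmetric polytope can be written as {x ∈ ℝⁿ : |aᵢᵀx| ≤ 1 for i = 1,…,m} for some vectors a₁,…,a_m ∈ ℝⁿ, and an ellipsoid centered at the origin is a set {x ∈ ℝⁿ : xᵀPx ≤ 1} with P positive definite. -/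
open Matrix Polynomial Real Finset


noncomputable section
namespace GEAux

variable (m : ℕ)

def xn (i : Fin m) : ℝ := Real.cos ((2 * i + 1) * Real.pi / (2 * m))

def wP : Polynomial ℝ := ∏ i : Fin m, (X - C (xn m i))

def rP (i : Fin m) : Polynomial ℝ := ∏ j ∈ Finset.univ.erase i, (X - C (xn m j))

lemma derivative_finset_prod {ι : Type*} [DecidableEq ι] (s : Finset ι) (f : ι → Polynomial ℝ) :
    derivative (∏ i ∈ s, f i) = ∑ i ∈ s, (∏ j ∈ s.erase i, f j) * derivative (f i) := by
  induction s using Finset.induction_on with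
  | empty => simp
  | insert a s ha ih =>
    have hs : ∀ i ∈ s, (∏ j ∈ (insert a s).erase i, f j) = f a * ∏ j ∈ s.erase i, f j := by
      intro i hi
      rw [Finset.erase_insert_of_ne (Ne.symm (fun h : i = a => ha (h ▸ hi))),
        Finset.prod_insert (fun h => ha (Finset.erase_subset _ _ h))]
    rw [Finset.prod_insert ha, derivative_mul, ih, Finset.sum_insert ha, Finset.erase_insert ha,
      Finset.mul_sum]
    rw [show ∑ i ∈ s, (∏ j ∈ (insert a s).erase i, f j) * derivative (f i)
        = ∑ i ∈ s, f a * ((∏ j ∈ s.erase i, f j) * derivative (f i)) from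
      Finset.sum_congr rfl fun i hi => by rw [hs i hi]; ring]
    ring

lemma X_sub_mul_rP (i : Fin m) : (X - C (xn m i)) * rP m i = wP m := by
  rw [rP, wP]; exact Finset.mul_prod_erase Finset.univ (fun j => X - C (xn m j)) (Finset.mem_univ i)

lemma deriv_wP : derivative (wP m) = ∑ i : Fin m, rP m i := by
  rw [wP, derivative_finset_prod]
  simp [rP]

lemma deriv_rP (i : Fin m) :
    derivative (rP m i) = ∑ j ∈ Finset.univ.erase i,
      ∏ k ∈ (Finset.univ.erase i).erase j, (X - C (xn m k)) := by
  rw [rP, derivative_finset_prod]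
  simp

lemma rP_mul_rP {i j : Fin m} (hij : j ≠ i) :
    rP m i * rP m j = wP m * ∏ k ∈ (Finset.univ.erase i).erase j, (X - C (xn m k)) := by
  have hji : j ∈ Finset.univ.erase i := Finset.mem_erase.2 ⟨hij, Finset.mem_univ j⟩
  have h1 : rP m i = (X - C (xn m j)) * ∏ k ∈ (Finset.univ.erase i).erase j, (X - C (xn m k)) :=
    (Finset.mul_prod_erase _ _ hji).symm
  have h2 : rP m j = (X - C (xn m i)) * ∏ k ∈ (Finset.univ.erase j).erase i, (X - C (xn m k)) :=
    (Finset.mul_prod_erase _ _ (Finset.mem_erase.2 ⟨hij.symm, Finset.mem_univ i⟩)).symm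
  rw [Finset.erase_right_comm] at h2
  rw [h1, h2, ← X_sub_mul_rP m i, h1]
  ring

lemma sum_rP_sq :
    ∑ i : Fin m, (rP m i) ^ 2 =
      (derivative (wP m)) ^ 2 - wP m * derivative (derivative (wP m)) := by
  have hd2 : wP m * derivative (derivative (wP m)) =
      ∑ i : Fin m, ∑ j ∈ Finset.univ.erase i, rP m i * rP m j := by
    rw [deriv_wP, derivative_sum]
    rw [Finset.mul_sum]
    refine Finset.sum_congr rfl fun i _ => ?_
    rw [deriv_rP, Finset.mul_sum]
    refine Finset.sum_congr rfl fun j hj => ?_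
    rw [rP_mul_rP m (Finset.mem_erase.1 hj).1]
  have hsq : (derivative (wP m)) ^ 2 =
      ∑ i : Fin m, ∑ j : Fin m, rP m i * rP m j := by
    rw [deriv_wP, sq, Finset.sum_mul_sum]
  rw [hsq, hd2, ← Finset.sum_sub_distrib]
  refine Finset.sum_congr rfl fun i _ => ?_
  rw [← Finset.add_sum_erase _ _ (Finset.mem_univ i)]
  ring

lemma polyA :
    ∑ i : Fin m, (1 - C (xn m i) * X) * (rP m i) ^ 2 =
      (1 - X ^ 2) * ((derivative (wP m)) ^ 2 - wP m * derivative (derivative (wP m)))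
        + X * (wP m * derivative (wP m)) := by
  have h : ∀ i : Fin m, (1 - C (xn m i) * X) * (rP m i) ^ 2 =
      (1 - X ^ 2) * (rP m i) ^ 2 + X * (wP m * rP m i) := by
    intro i
    rw [← X_sub_mul_rP m i]
    ring
  rw [Finset.sum_congr rfl fun i _ => h i, Finset.sum_add_distrib, ← Finset.mul_sum,
    sum_rP_sq, ← Finset.mul_sum, ← Finset.mul_sum, ← deriv_wP]


lemma T_natDegree_le : ∀ k : ℕ, (Polynomial.Chebyshev.T ℝ k).natDegree ≤ k := by
  intro k
  induction k using Nat.strong_induction_on with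
  | _ k ih =>
    match k with
    | 0 => simp [Polynomial.Chebyshev.T_zero]
    | 1 => simp [Polynomial.Chebyshev.T_one]
    | (k+2) =>
      have h2 : ((k:ℤ) + 2) = ((k+2 : ℕ) : ℤ) := by push_cast; ring
      have := Polynomial.Chebyshev.T_add_two ℝ (k : ℤ)
      have hk1 : ((k:ℤ) + 1) = ((k+1 : ℕ) : ℤ) := by push_cast; ring
      rw [h2, hk1] at this
      rw [this]
      refine le_trans (natDegree_sub_le _ _)
        (max_le ?_ (le_trans (ih k (by omega)) (by omega)))
      have h1 : (2 * X : ℝ[X]).natDegree ≤ 1 := le_trans natDegree_mul_le (by simp)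
      have ht := ih (k+1) (by omega)
      exact le_trans natDegree_mul_le (by omega)

lemma T_coeff : ∀ k : ℕ, (Polynomial.Chebyshev.T ℝ (k+1 : ℕ)).coeff (k+1) = 2 ^ k := by
  intro k
  induction k using Nat.strong_induction_on with
  | _ k ih =>
    match k with
    | 0 => simp [Polynomial.Chebyshev.T_one]
    | (k+1) =>
      have h2 : ((k:ℤ) + 2) = ((k+2 : ℕ) : ℤ) := by push_cast; ring
      have hT := Polynomial.Chebyshev.T_add_two ℝ (k : ℤ)
      rw [h2] at hT
      have hk1 : ((k:ℤ) + 1) = ((k+1 : ℕ) : ℤ) := by push_cast; ring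
      rw [hk1] at hT
      show (Polynomial.Chebyshev.T ℝ (k+2:ℕ)).coeff (k+2) = 2 ^ (k+1)
      rw [hT, coeff_sub]
      have hck : (Polynomial.Chebyshev.T ℝ (k:ℕ)).coeff (k+2) = 0 :=
        coeff_eq_zero_of_natDegree_lt (lt_of_le_of_lt (T_natDegree_le k) (by omega))
      have h2X : (2 * X * Polynomial.Chebyshev.T ℝ (k+1:ℕ)).coeff (k+2) = 2 ^ (k+1) := by
        rw [mul_assoc, show ((2 : ℝ[X])) = C 2 by norm_cast, coeff_C_mul, coeff_X_mul,
          ih k (by omega)]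
        ring
      rw [h2X, hck, sub_zero]


lemma theta_mem {m : ℕ} (hm : 1 ≤ m) (i : Fin m) :
    (2 * (i:ℝ) + 1) * Real.pi / (2 * m) ∈ Set.Icc 0 Real.pi := by
  have hpi := Real.pi_pos
  have hi : (i : ℝ) ≤ (m : ℝ) - 1 := by
    have := i.2
    have : (i : ℝ) + 1 ≤ (m : ℝ) := by exact_mod_cast i.2
    linarith
  have hm0 : (0:ℝ) < m := by exact_mod_cast hm
  constructor
  · positivity
  · rw [div_le_iff₀ (by positivity)]
    nlinarith

lemma xn_mem {m : ℕ} (i : Fin m) : xn m i ∈ Set.Icc (-1:ℝ) 1 :=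
  ⟨Real.neg_one_le_cos _, Real.cos_le_one _⟩

lemma xn_inj {m : ℕ} (hm : 1 ≤ m) : Function.Injective (xn m) := by
  intro i j hij
  have hm0 : (0:ℝ) < m := by exact_mod_cast hm
  have hpi := Real.pi_pos
  have h := Real.injOn_cos (theta_mem hm i) (theta_mem hm j) hij
  field_simp at h
  exact Fin.ext (by exact_mod_cast (by linarith : ((i:ℕ):ℝ) = j))

lemma T_eval_xn {m : ℕ} (hm : 1 ≤ m) (i : Fin m) :
    (Polynomial.Chebyshev.T ℝ (m:ℕ)).eval (xn m i) = 0 := by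
  rw [xn, Polynomial.Chebyshev.T_real_cos]
  have hm0 : (m:ℝ) ≠ 0 := by positivity
  have : ((m:ℤ):ℝ) * ((2 * (i:ℝ) + 1) * Real.pi / (2 * m)) = (2 * (i:ℝ) + 1) * (Real.pi/2) := by
    push_cast
    field_simp
  rw [this]
  rw [Real.cos_eq_zero_iff]
  exact ⟨i, by push_cast; ring⟩

lemma wP_monic (m : ℕ) : (wP m).Monic :=
  monic_prod_of_monic _ _ fun i _ => monic_X_sub_C _

lemma wP_natDegree (m : ℕ) : (wP m).natDegree = m := by
  rw [wP, natDegree_prod _ _ fun i _ => X_sub_C_ne_zero _]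
  simp

lemma w_eq {m : ℕ} (hm : 1 ≤ m) :
    Polynomial.Chebyshev.T ℝ (m:ℕ) = C ((2:ℝ)^(m-1)) * wP m := by
  set p := Polynomial.Chebyshev.T ℝ (m:ℕ) - C ((2:ℝ)^(m-1)) * wP m with hp
  by_contra hne
  have hp0 : p ≠ 0 := sub_ne_zero.2 hne
  have hcoeff : p.coeff m = 0 := by
    rw [hp, coeff_sub, coeff_C_mul]
    have h1 : (wP m).coeff m = 1 := by
      have := (wP_monic m).leadingCoeff
      rwa [leadingCoeff, wP_natDegree] at this
    obtain ⟨k, rfl⟩ : ∃ k, m = k + 1 := ⟨m - 1, by omega⟩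
    rw [T_coeff k, h1]
    simp
  have hdeg : p.natDegree < m := by
    have hle : p.natDegree ≤ m := le_trans (natDegree_sub_le _ _)
      (max_le (T_natDegree_le m) (le_trans natDegree_mul_le (by simp [wP_natDegree])))
    rcases lt_or_eq_of_le hle with h | h
    · exact h
    · exfalso
      apply leadingCoeff_ne_zero.2 hp0
      rw [leadingCoeff, h]
      exact hcoeff
  have hroots : ∀ i : Fin m, p.IsRoot (xn m i) := by
    intro i
    have hw : (wP m).eval (xn m i) = 0 := by
      rw [wP, eval_prod]
      exact Finset.prod_eq_zero (Finset.mem_univ i) (by simp)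
    simp [hp, IsRoot, T_eval_xn hm i, hw]
  have hsub : (Finset.univ.image (xn m)) ⊆ p.roots.toFinset := by
    intro x hx
    obtain ⟨i, _, rfl⟩ := Finset.mem_image.1 hx
    rw [Multiset.mem_toFinset, mem_roots hp0]
    exact hroots i
  have hcard : m ≤ p.roots.toFinset.card := by
    have := Finset.card_le_card hsub
    rwa [Finset.card_image_of_injective _ (xn_inj hm), Finset.card_univ, Fintype.card_fin] at this
  have : p.roots.toFinset.card ≤ p.natDegree :=
    le_trans (Multiset.toFinset_card_le _) (p.card_roots')
  omega


lemma eval_w_cos {m : ℕ} (hm : 1 ≤ m) (θ : ℝ) :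
    (2:ℝ)^(m-1) * (wP m).eval (Real.cos θ) = Real.cos (m * θ) := by
  have := Polynomial.Chebyshev.T_real_cos θ (m:ℤ)
  rw [w_eq hm] at this
  rw [eval_mul, eval_C] at this
  rw [this]
  norm_num

lemma eval_w'_cos {m : ℕ} (hm : 1 ≤ m) (θ : ℝ) :
    (2:ℝ)^(m-1) * (Real.sin θ * (derivative (wP m)).eval (Real.cos θ))
      = m * Real.sin (m * θ) := by
  have hL : ∀ ψ : ℝ, HasDerivAt (fun ψ => (2:ℝ)^(m-1) * (wP m).eval (Real.cos ψ))
      ((2:ℝ)^(m-1) * ((derivative (wP m)).eval (Real.cos ψ) * (-Real.sin ψ))) ψ :=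
    fun ψ => (((wP m).hasDerivAt (Real.cos ψ)).comp ψ (Real.hasDerivAt_cos ψ)).const_mul _
  have heq : (fun ψ => (2:ℝ)^(m-1) * (wP m).eval (Real.cos ψ))
      = fun ψ => Real.cos ((m:ℝ) * ψ) := funext fun ψ => eval_w_cos hm ψ
  have hR : HasDerivAt (fun ψ => Real.cos ((m:ℝ) * ψ)) (-Real.sin ((m:ℝ)*θ) * ((m:ℝ)*1)) θ :=
    (Real.hasDerivAt_cos _).comp θ ((hasDerivAt_id θ).const_mul _)
  have := (heq ▸ hL θ).unique hR
  nlinarith [this]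

lemma eval_w''_cos {m : ℕ} (hm : 1 ≤ m) (θ : ℝ) :
    (2:ℝ)^(m-1) * (Real.sin θ ^ 2 * (derivative (derivative (wP m))).eval (Real.cos θ))
      = (2:ℝ)^(m-1) * (Real.cos θ * (derivative (wP m)).eval (Real.cos θ))
        - (m:ℝ)^2 * Real.cos (m * θ) := by
  have hL : ∀ ψ : ℝ, HasDerivAt
      (fun ψ => (2:ℝ)^(m-1) * (Real.sin ψ * (derivative (wP m)).eval (Real.cos ψ)))
      ((2:ℝ)^(m-1) * (Real.cos ψ * (derivative (wP m)).eval (Real.cos ψ)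
        + Real.sin ψ * ((derivative (derivative (wP m))).eval (Real.cos ψ) * (-Real.sin ψ)))) ψ :=
    fun ψ => ((Real.hasDerivAt_sin ψ).mul
      (((derivative (wP m)).hasDerivAt (Real.cos ψ)).comp ψ (Real.hasDerivAt_cos ψ))).const_mul _
  have heq : (fun ψ => (2:ℝ)^(m-1) * (Real.sin ψ * (derivative (wP m)).eval (Real.cos ψ)))
      = fun ψ => (m:ℝ) * Real.sin ((m:ℝ) * ψ) := funext fun ψ => eval_w'_cos hm ψ
  have hR : HasDerivAt (fun ψ => (m:ℝ) * Real.sin ((m:ℝ) * ψ))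
      ((m:ℝ) * (Real.cos ((m:ℝ)*θ) * ((m:ℝ)*1))) θ :=
    (((Real.hasDerivAt_sin _).comp θ ((hasDerivAt_id θ).const_mul _))).const_mul _
  have := (heq ▸ hL θ).unique hR
  nlinarith [this]

def LP (m : ℕ) (i : Fin m) : Polynomial ℝ :=
  C (((2:ℝ)^(m-1))^2 / (m:ℝ)^2) * ((1 - C (xn m i) * X) * (rP m i) ^ 2)

lemma sum_LP_eval {m : ℕ} (hm : 1 ≤ m) {t : ℝ} (ht : t ∈ Set.Icc (-1:ℝ) 1) :
    ∑ i : Fin m, (LP m i).eval t = 1 := by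
  set θ := Real.arccos t with hθ
  have hcos : Real.cos θ = t := Real.cos_arccos ht.1 ht.2
  set γ := (2:ℝ)^(m-1) with hγ
  set E0 := (wP m).eval t with hE0
  set E1 := (derivative (wP m)).eval t with hE1
  set E2 := (derivative (derivative (wP m))).eval t with hE2
  set S := Real.sin θ with hS
  set cm := Real.cos ((m:ℝ) * θ) with hcm
  set sm := Real.sin ((m:ℝ) * θ) with hsm
  have hA : γ * E0 = cm := by rw [hE0, ← hcos]; exact eval_w_cos hm θ
  have hB : γ * (S * E1) = (m:ℝ) * sm := by rw [hE1, ← hcos]; exact eval_w'_cos hm θ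
  have hC : γ * (S^2 * E2) = γ * (t * E1) - (m:ℝ)^2 * cm := by
    rw [hE2, hE1, ← hcos]; exact eval_w''_cos hm θ
  have hp : sm^2 + cm^2 = 1 := by rw [hsm, hcm]; exact Real.sin_sq_add_cos_sq _
  have hS2 : S^2 = 1 - t^2 := by
    have := Real.sin_sq_add_cos_sq θ
    rw [hcos] at this
    linarith
  have key : γ^2 * ((1 - t^2) * (E1^2 - E0*E2) + t * (E0*E1)) = (m:ℝ)^2 := by
    linear_combination (γ*(S*E1) + (m:ℝ)*sm) * hB - γ*E0 * hC + (m:ℝ)^2*cm * hA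
      + (m:ℝ)^2 * hp - γ^2*(E1^2 - E0*E2) * hS2
  have heval : ∑ i : Fin m, ((1 - C (xn m i) * X) * (rP m i) ^ 2).eval t
      = (1 - t^2) * (E1^2 - E0*E2) + t * (E0*E1) := by
    have := congrArg (Polynomial.eval t) (polyA m)
    rw [eval_finset_sum] at this
    rw [this]
    simp [hE0, hE1, hE2]
  have hm0 : (m:ℝ) ≠ 0 := by positivity
  have hγ0 : γ ≠ 0 := by positivity
  calc ∑ i : Fin m, (LP m i).eval t
      = (γ^2 / (m:ℝ)^2) * ∑ i : Fin m, ((1 - C (xn m i) * X) * (rP m i) ^ 2).eval t := by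
        rw [Finset.mul_sum]
        refine Finset.sum_congr rfl fun i _ => ?_
        rw [LP, eval_mul, eval_C]
    _ = 1 := by rw [heval]; field_simp; linear_combination key


lemma LP_nonneg {m : ℕ} (i : Fin m) {t : ℝ} (ht : t ∈ Set.Icc (-1:ℝ) 1) :
    0 ≤ (LP m i).eval t := by
  rw [LP, eval_mul, eval_C, eval_mul, eval_pow]
  have hx := xn_mem i
  have h1 : (0:ℝ) ≤ ((2:ℝ)^(m-1))^2 / (m:ℝ)^2 := by positivity
  have h2 : (0:ℝ) ≤ (1 - C (xn m i) * X : ℝ[X]).eval t := by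
    simp only [eval_sub, eval_one, eval_mul, eval_C, eval_X]
    nlinarith [hx.1, hx.2, ht.1, ht.2]
  positivity

lemma LP_eval_node_ne {m : ℕ} {i j : Fin m} (hij : i ≠ j) : (LP m j).eval (xn m i) = 0 := by
  rw [LP, eval_mul, eval_mul, eval_pow]
  have : (rP m j).eval (xn m i) = 0 := by
    rw [rP, eval_prod]
    exact Finset.prod_eq_zero (Finset.mem_erase.2 ⟨hij, Finset.mem_univ i⟩) (by simp)
  rw [this]
  ring

lemma LP_eval_node_self {m : ℕ} (hm : 1 ≤ m) (i : Fin m) : (LP m i).eval (xn m i) = 1 := by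
  have hs := sum_LP_eval hm (xn_mem i)
  rwa [Finset.sum_eq_single i (fun j _ hji => LP_eval_node_ne (Ne.symm hji))
    (fun h => absurd (Finset.mem_univ i) h)] at hs

lemma LP_natDegree_le {m : ℕ} (i : Fin m) : (LP m i).natDegree ≤ 2 * m + 1 := by
  refine le_trans (natDegree_C_mul_le _ _) (le_trans natDegree_mul_le ?_)
  have h1 : (1 - C (xn m i) * X : ℝ[X]).natDegree ≤ 1 :=
    le_trans (natDegree_sub_le _ _) (by
      simp only [natDegree_one, max_le_iff]
      exact ⟨by omega, le_trans (natDegree_C_mul_le _ _) natDegree_X_le⟩)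
  have h2 : (rP m i).natDegree ≤ m := by
    refine le_trans (natDegree_prod_le _ _) (le_trans (Finset.sum_le_card_nsmul _ _ 1
      (fun j _ => le_of_eq (natDegree_X_sub_C _))) ?_)
    simp only [smul_eq_mul, mul_one]
    exact le_trans (Finset.card_le_card (Finset.erase_subset _ _)) (by simp)
  have h3 : ((rP m i) ^ 2).natDegree ≤ 2 * m := le_trans natDegree_pow_le (by omega)
  omega

lemma dot_sum_mulVec {n m : ℕ} (x y : Fin n → ℝ) (M : Fin m → Matrix (Fin n) (Fin n) ℝ)
    (s : Finset (Fin m)) :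
    x ⬝ᵥ (∑ i ∈ s, M i).mulVec y = ∑ i ∈ s, x ⬝ᵥ (M i).mulVec y := by
  induction s using Finset.induction_on with
  | empty => simp [Matrix.zero_mulVec]
  | insert a s ha ih =>
    rw [Finset.sum_insert ha, Finset.sum_insert ha, Matrix.add_mulVec, dotProduct_add, ih]

lemma sum_mulVec' {n m : ℕ} (y : Fin n → ℝ) (M : Fin m → Matrix (Fin n) (Fin n) ℝ)
    (s : Finset (Fin m)) :
    (∑ i ∈ s, M i).mulVec y = ∑ i ∈ s, (M i).mulVec y := by
  induction s using Finset.induction_on with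
  | empty => simp [Matrix.zero_mulVec]
  | insert a s ha ih =>
    rw [Finset.sum_insert ha, Finset.sum_insert ha, Matrix.add_mulVec, ih]


end GEAux
end

namespace GEAux

theorem isGE_of_quadratics {n m : ℕ} (hm : 1 ≤ m) (Q : Fin m → Matrix (Fin n) (Fin n) ℝ)
    (hsymm : ∀ i, (Q i).IsSymm)
    (hpsd : ∀ i x, 0 ≤ x ⬝ᵥ (Q i).mulVec x)
    (hker : ∀ x : Fin n → ℝ, (∀ i, (Q i).mulVec x = 0) → x = 0) :
    IsGE n (2 * m + 1) {x | ∀ i, x ⬝ᵥ (Q i).mulVec x ≤ 1} := by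
  classical
  have hmap : ∀ t : ℝ, (Matrix.of fun p q => ∑ i : Fin m, LP m i * C (Q i p q)).map
      (Polynomial.eval t) = ∑ i : Fin m, (LP m i).eval t • Q i := by
    intro t
    ext p q
    simp [Matrix.map_apply, eval_finset_sum, Matrix.sum_apply]
  have hvec : ∀ (t : ℝ) (x : Fin n → ℝ),
      ((Matrix.of fun p q => ∑ i : Fin m, LP m i * C (Q i p q)).map
        (Polynomial.eval t)).mulVec x = ∑ i : Fin m, (LP m i).eval t • (Q i).mulVec x := by
    intro t x
    rw [hmap, sum_mulVec']
    exact Finset.sum_congr rfl fun i _ => Matrix.smul_mulVec _ _ _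
  have hquad : ∀ (t : ℝ) (x : Fin n → ℝ),
      x ⬝ᵥ ((Matrix.of fun p q => ∑ i : Fin m, LP m i * C (Q i p q)).map
        (Polynomial.eval t)).mulVec x = ∑ i : Fin m, (LP m i).eval t * (x ⬝ᵥ (Q i).mulVec x) := by
    intro t x
    rw [hmap, dot_sum_mulVec]
    refine Finset.sum_congr rfl fun i _ => ?_
    rw [Matrix.smul_mulVec, dotProduct_smul, smul_eq_mul]
  have hnodevec : ∀ (i : Fin m) (x : Fin n → ℝ),
      ((Matrix.of fun p q => ∑ i : Fin m, LP m i * C (Q i p q)).map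
        (Polynomial.eval (xn m i))).mulVec x = (Q i).mulVec x := by
    intro i x
    rw [hvec]
    rw [Finset.sum_eq_single i (fun j _ hji => by rw [LP_eval_node_ne (Ne.symm hji), zero_smul])
      (fun h => absurd (Finset.mem_univ i) h), LP_eval_node_self hm i, one_smul]
  refine ⟨Matrix.of fun p q => ∑ i : Fin m, LP m i * C (Q i p q), ?_, ?_, ?_, ?_, ?_⟩
  · -- symm
    refine Matrix.IsSymm.ext fun p q => ?_
    simp only [Matrix.of_apply]
    exact Finset.sum_congr rfl fun i _ => by rw [(hsymm i).apply p q]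
  · -- degree
    intro p q
    simp only [Matrix.of_apply]
    refine natDegree_sum_le_of_forall_le _ _ fun i _ => ?_
    refine le_trans natDegree_mul_le ?_
    have := LP_natDegree_le i
    simp only [natDegree_C]
    omega
  · -- psd
    intro t ht
    refine Matrix.posSemidef_iff_dotProduct_mulVec.mpr ⟨?_, ?_⟩
    · rw [Matrix.IsHermitian, Matrix.conjTranspose_eq_transpose_of_trivial]
      refine Matrix.IsSymm.ext fun p q => ?_
      rw [hmap]
      simp only [Matrix.sum_apply, Matrix.smul_apply, smul_eq_mul]
      exact Finset.sum_congr rfl fun i _ => by rw [(hsymm i).apply p q]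
    · intro x
      rw [star_trivial, hquad]
      exact Finset.sum_nonneg fun i _ => mul_nonneg (LP_nonneg i ht) (hpsd i x)
  · -- kernel
    intro x hx
    refine hker x fun i => ?_
    have := hx (xn m i) (xn_mem i)
    rwa [hnodevec] at this
  · -- set equality
    ext x
    simp only [Set.mem_setOf_eq]
    constructor
    · intro hx t ht
      rw [hquad]
      calc ∑ i : Fin m, (LP m i).eval t * (x ⬝ᵥ (Q i).mulVec x)
          ≤ ∑ i : Fin m, (LP m i).eval t :=
            Finset.sum_le_sum fun i _ => by
              have := mul_le_mul_of_nonneg_left (hx i) (LP_nonneg i ht)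
              simpa using this
        _ = 1 := sum_LP_eval hm ht
    · intro hx i
      have := hx (xn m i) (xn_mem i)
      rwa [hnodevec i x] at this

end GEAux

/-- every full-dimensional origin-symmetric polytope — i.e. every compact set
of the form `{x : |aᵢᵀx| ≤ 1, i = 1,…,m}` — is a generalized ellipsoid centered at the
origin, and every finite intersection of ellipsoids `{x : xᵀPᵢx ≤ 1}` (with each `Pᵢ`
positive definite) centered at the origin is a generalized ellipsoid centered at the
origin. -/
theorem stmt_15 {n : ℕ} :
    (∀ (m : ℕ) (a : Fin m → (Fin n → ℝ)) (T : Set (Fin n → ℝ)),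
        T = {x : Fin n → ℝ | ∀ i, |a i ⬝ᵥ x| ≤ 1} → IsCompact T →
        ∃ d : ℕ, IsGE n d T) ∧
    (∀ (m : ℕ), 1 ≤ m → ∀ P : Fin m → Matrix (Fin n) (Fin n) ℝ, (∀ i, (P i).PosDef) →
        ∃ d : ℕ, IsGE n d (⋂ i : Fin m, {x : Fin n → ℝ | x ⬝ᵥ (P i).mulVec x ≤ 1})) := by
  constructor
  · intro m a T hT hTc
    rcases Nat.eq_zero_or_pos m with hm0 | hm
    · -- m = 0 : T = univ and compactness forces n = 0
      subst hm0
      have hTuniv : T = Set.univ := by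
        rw [hT]; ext x; simp
      have hn : n = 0 := by
        by_contra hn
        have hne : Nonempty (Fin n) := ⟨⟨0, Nat.pos_of_ne_zero hn⟩⟩
        obtain ⟨r, hr⟩ := (isBounded_iff_forall_norm_le).1 hTc.isBounded
        have h0 : (0:ℝ) ≤ r := by
          have := hr 0 (by rw [hTuniv]; trivial)
          simpa using this
        have := hr (fun _ => r + 1) (by rw [hTuniv]; trivial)
        rw [pi_norm_const (r+1 : ℝ)] at this
        have : ‖(r+1 : ℝ)‖ ≤ r := this
        rw [Real.norm_eq_abs] at this
        rw [abs_of_nonneg (by linarith)] at this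
        linarith
      subst hn
      refine ⟨0, (0 : Matrix (Fin 0) (Fin 0) ℝ[X]), ?_, ?_, ?_, ?_, ?_⟩
      · simp [Matrix.IsSymm]
      · intro i j; simp
      · intro t ht
        constructor
        · simp [Matrix.IsHermitian]
        · intro x; simp [Matrix.mulVec_zero]
      · intro x _
        exact Subsingleton.elim x 0
      · rw [hTuniv]
        ext x
        simp [Matrix.mulVec_zero]
    · -- m ≥ 1
      set Q : Fin m → Matrix (Fin n) (Fin n) ℝ := fun i => Matrix.vecMulVec (a i) (a i) with hQ
      have hQvec : ∀ i (x : Fin n → ℝ), (Q i).mulVec x = (a i ⬝ᵥ x) • a i := by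
        intro i x
        ext p
        simp only [hQ, Matrix.mulVec, Matrix.vecMulVec_apply, dotProduct, Pi.smul_apply,
          smul_eq_mul]
        rw [Finset.sum_mul]
        exact Finset.sum_congr rfl fun q _ => by ring
      have hQquad : ∀ i (x : Fin n → ℝ), x ⬝ᵥ (Q i).mulVec x = (a i ⬝ᵥ x)^2 := by
        intro i x
        rw [hQvec, dotProduct_smul, smul_eq_mul, dotProduct_comm]
        ring
      have hker : ∀ x : Fin n → ℝ, (∀ i, (Q i).mulVec x = 0) → x = 0 := by
        intro x hx
        have hdot : ∀ i, a i ⬝ᵥ x = 0 := by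
          intro i
          have := hx i
          rw [hQvec] at this
          rcases smul_eq_zero.1 this with h | h
          · exact h
          · rw [h] at this ⊢
            simp
        have hmem : ∀ c : ℝ, c • x ∈ T := by
          intro c
          rw [hT]
          intro i
          rw [dotProduct_smul, hdot i]
          simp
        by_contra hx0
        obtain ⟨r, hr⟩ := (isBounded_iff_forall_norm_le).1 hTc.isBounded
        have hxn : 0 < ‖x‖ := norm_pos_iff.2 hx0
        have h0 : (0:ℝ) ≤ r := le_trans (norm_nonneg _) (hr _ (hmem 0)) |>.trans (by simp [norm_smul])
        have := hr _ (hmem ((r+1)/‖x‖))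
        rw [norm_smul, Real.norm_eq_abs, abs_of_nonneg (by positivity)] at this
        rw [div_mul_cancel₀ _ hxn.ne'] at this
        have h0' : (0:ℝ) ≤ r := le_trans (by norm_num : (0:ℝ) ≤ 1) (by linarith)
        linarith
      have hTQ : T = {x | ∀ i, x ⬝ᵥ (Q i).mulVec x ≤ 1} := by
        rw [hT]
        ext x
        simp only [Set.mem_setOf_eq]
        refine forall_congr' fun i => ?_
        rw [hQquad, sq_le_one_iff_abs_le_one]
      refine ⟨2 * m + 1, hTQ ▸ GEAux.isGE_of_quadratics hm Q ?_ ?_ hker⟩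
      · intro i
        exact Matrix.IsSymm.ext fun p q => by simp [hQ, Matrix.vecMulVec_apply]; ring
      · intro i x
        rw [hQquad]
        positivity
  · intro m hm P hP
    have hsymm : ∀ i, (P i).IsSymm := by
      intro i
      rw [Matrix.IsSymm, ← Matrix.conjTranspose_eq_transpose_of_trivial]
      exact (hP i).1
    have hpsd : ∀ i x, 0 ≤ x ⬝ᵥ (P i).mulVec x := by
      intro i x
      have := (hP i).posSemidef.dotProduct_mulVec_nonneg x
      rwa [star_trivial] at this
    have hker : ∀ x : Fin n → ℝ, (∀ i, (P i).mulVec x = 0) → x = 0 := by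
      intro x hx
      by_contra hx0
      have := (hP ⟨0, hm⟩).dotProduct_mulVec_pos hx0
      rw [hx ⟨0, hm⟩] at this
      simp at this
    have hset : (⋂ i : Fin m, {x : Fin n → ℝ | x ⬝ᵥ (P i).mulVec x ≤ 1})
        = {x | ∀ i, x ⬝ᵥ (P i).mulVec x ≤ 1} := by
      ext x; simp [Set.mem_iInter]
    exact ⟨2 * m + 1, hset ▸ GEAux.isGE_of_quadratics hm P hsymm hpsd hker⟩
end

section
/- Let H ∈ ℝ^{m×n} with rows h₁ᵀ, …, h_mᵀ, let Â, Ǎ ∈ ℝ^{n×n}, and define A(t) = ((1+t)/2)·Â + ((1-t)/2)·Ǎ and S = {x ∈ ℝⁿ : H·Aᵏ·x ≤ 𝟏 (entrywise) for all integers k ≥ 0 and all A ∈ conv(Â, Ǎ)}. Suppose P(t) is a symmetric n×n univariate polynomial matrix of degree at most d satisfying P(t) ⪰ 0 for all t ∈ [-1,1], ⋂_{t∈[-1,1]} Ker(P(t)) = {0}, P(t) - A(t)ᵀP(t)A(t) ⪰ 0 for all t ∈ [-1,1], and P(t) ⪰ hᵢhᵢᵀ for all t ∈ [-1,1] and i =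 1,…,m. Then the generalized ellipsoid E = {x ∈ ℝⁿ : xᵀP(t)x ≤ 1 for all t ∈ [-1,1]} satisfies E ⊆ S. -/
open Matrix Polynomial

/-- robust-to-dynamics optimization. If the polynomial matrix `P(t)` is
symmetric of degree at most `d`, satisfies the psd and kernel conditions on `[-1,1]`,
satisfies `P(t) - A(t)ᵀP(t)A(t) ⪰ 0` on `[-1,1]` (where
`A(t) = ((1+t)/2)·Â + ((1-t)/2)·Ǎ`), and satisfies `P(t) ⪰ hᵢhᵢᵀ` on `[-1,1]` for every
row `hᵢᵀ` of `H`, then the generalized ellipsoid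
`E = {x : xᵀP(t)x ≤ 1 ∀ t ∈ [-1,1]}` is contained in
`S = {x : H·Aᵏ·x ≤ 𝟏 ∀ k ≥ 0, ∀ A ∈ conv(Â, Ǎ)}`. -/
theorem stmt_19 {m n : ℕ} (H : Matrix (Fin m) (Fin n) ℝ)
    (Ahat Acheck : Matrix (Fin n) (Fin n) ℝ) (d : ℕ)
    (P : Matrix (Fin n) (Fin n) (Polynomial ℝ))
    (hsymm : P.IsSymm)
    (hdeg : ∀ i j, (P i j).natDegree ≤ d)
    (hpsd : ∀ t ∈ Set.Icc (-1 : ℝ) 1, (P.map (Polynomial.eval t)).PosSemidef)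
    (hker : ∀ x : Fin n → ℝ,
      (∀ t ∈ Set.Icc (-1 : ℝ) 1, (P.map (Polynomial.eval t)).mulVec x = 0) → x = 0)
    (hlyap : ∀ t ∈ Set.Icc (-1 : ℝ) 1,
      (P.map (Polynomial.eval t) -
        (((1 + t) / 2) • Ahat + ((1 - t) / 2) • Acheck)ᵀ *
          P.map (Polynomial.eval t) *
          (((1 + t) / 2) • Ahat + ((1 - t) / 2) • Acheck)).PosSemidef)
    (hrow : ∀ t ∈ Set.Icc (-1 : ℝ) 1, ∀ i : Fin m,
      (P.map (Polynomial.eval t) -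
        Matrix.vecMulVec (fun j => H i j) (fun j => H i j)).PosSemidef) :
    {x : Fin n → ℝ | ∀ t ∈ Set.Icc (-1 : ℝ) 1,
        x ⬝ᵥ (P.map (Polynomial.eval t)).mulVec x ≤ 1} ⊆
      {x : Fin n → ℝ | ∀ k : ℕ, ∀ lam ∈ Set.Icc (0 : ℝ) 1, ∀ i : Fin m,
        (H.mulVec (((lam • Ahat + (1 - lam) • Acheck) ^ k).mulVec x)) i ≤ 1} := by

  intro x hx k lam hlam i
  set t : ℝ := 2 * lam - 1 with ht
  have htI : t ∈ Set.Icc (-1 : ℝ) 1 := by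
    obtain ⟨h0, h1⟩ := hlam
    constructor <;> simp [ht] <;> linarith
  have h1 : (1 + t) / 2 = lam := by rw [ht]; ring
  have h2 : (1 - t) / 2 = 1 - lam := by rw [ht]; ring
  set Q := P.map (Polynomial.eval t) with hQ
  set B := lam • Ahat + (1 - lam) • Acheck with hB
  have hBeq : ((1 + t) / 2) • Ahat + ((1 - t) / 2) • Acheck = B := by rw [h1, h2]
  have key : ∀ k : ℕ, ((B ^ k).mulVec x) ⬝ᵥ Q.mulVec ((B ^ k).mulVec x) ≤ 1 := by
    intro k
    induction k with
    | zero => simpa using hx t htI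
    | succ k ih =>
      have hL := hlyap t htI
      rw [hBeq] at hL
      set y := (B ^ k).mulVec x with hy
      have hnn := hL.dotProduct_mulVec_nonneg y
      rw [star_trivial] at hnn
      have heq : y ⬝ᵥ (Q - Bᵀ * Q * B).mulVec y
          = y ⬝ᵥ Q.mulVec y - (B.mulVec y) ⬝ᵥ Q.mulVec (B.mulVec y) := by
        rw [Matrix.sub_mulVec, dotProduct_sub]
        congr 1
        rw [Matrix.mul_assoc, ← Matrix.mulVec_mulVec, ← Matrix.mulVec_mulVec,
          Matrix.dotProduct_mulVec, Matrix.vecMul_transpose]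
      have hstep : (B.mulVec y) ⬝ᵥ Q.mulVec (B.mulVec y) ≤ y ⬝ᵥ Q.mulVec y := by
        rw [heq] at hnn; linarith
      have hpow : (B ^ (k + 1)).mulVec x = B.mulVec y := by
        rw [hy, pow_succ', ← Matrix.mulVec_mulVec]
      rw [hpow]
      exact le_trans hstep ih
  set y := (B ^ k).mulVec x with hy
  have hr := (hrow t htI i).dotProduct_mulVec_nonneg y
  rw [star_trivial] at hr
  have hvv : y ⬝ᵥ (Matrix.vecMulVec (fun j => H i j) (fun j => H i j)).mulVec y
      = ((fun j => H i j) ⬝ᵥ y) * ((fun j => H i j) ⬝ᵥ y) := by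
    simp [Matrix.vecMulVec_apply, Matrix.mulVec, dotProduct, Finset.mul_sum,
      Finset.sum_mul, mul_comm, mul_assoc, mul_left_comm]
  have hsq : ((fun j => H i j) ⬝ᵥ y) * ((fun j => H i j) ⬝ᵥ y) ≤ 1 := by
    have := key k
    rw [Matrix.sub_mulVec, dotProduct_sub, hvv] at hr
    linarith
  have hHy : H.mulVec y i = (fun j => H i j) ⬝ᵥ y := rfl
  rw [hHy]
  nlinarith [hsq]
end
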